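/- arXiv:2502.06912 — 5 statements merged into one kernel-verified Lean document; each statement's English description precedes it below -/
import Mathlib

section
/- Let L be a finite lattice whose cover graph has nullity k ≥ 1. Then 2 ≤ |Red(L)| ≤ 2k, where Red(L) is the set of reducible elements of L. -/
/-- An element of a lattice is join-reducible if it is the join of two elements
both distinct from it. -/
def JoinReducible {α : Type*} [Lattice α] (x : α) : Prop :=
  ∃ y z : α, y ≠ x ∧ z ≠ x ∧ y ⊔ z = x

/-- An element of a lattice is meet-reducible if it is the meet of two elements
both distinct from it. -/
def MeetReducible {α : Type*} [Lattice α] (x : α) : Prop :=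
  ∃ y z : α, y ≠ x ∧ z ≠ x ∧ y ⊓ z = x

/-- An element is reducible if it is join-reducible or meet-reducible. -/
def Reducible {α : Type*} [Lattice α] (x : α) : Prop :=
  JoinReducible x ∨ MeetReducible x

/-- `Red(L)`: the set of reducible elements of the lattice. -/
def RedSet (α : Type*) [Lattice α] : Set α := {x | Reducible x}

/-- `Irr(L)`: the set of doubly irreducible (i.e. non-reducible) elements. -/
def IrrSet (α : Type*) [Lattice α] : Set α := {x | ¬ Reducible x}

/-- The cover graph of a poset: vertices are the elements, edges are covering pairs. -/
def coverGraph (α : Type*) [PartialOrder α] : SimpleGraph α where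
  Adj x y := x ⋖ y ∨ y ⋖ x
  symm := ⟨fun _ _ h => h.symm⟩
  loopless := ⟨fun x h => by rcases h with h | h <;> exact h.lt.false⟩

/-- The nullity of a (finite) poset: `m - n + c` where `m` is the number of edges,
`n` the number of vertices and `c` the number of connected components of the cover graph. -/
noncomputable def nullity (α : Type*) [PartialOrder α] : ℤ :=
  (Nat.card (coverGraph α).edgeSet : ℤ) - (Nat.card α : ℤ)
    + (Nat.card (coverGraph α).ConnectedComponent : ℤ)

section Aux

open Finset

variable {α : Type*} [Lattice α] [Fintype α]

attribute [local instance] Classical.propDecidable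

/-- down-degree: number of lower covers. -/
noncomputable def ddeg (x : α) : ℕ := #(univ.filter fun y => y ⋖ x)

/-- up-degree: number of upper covers. -/
noncomputable def udeg (x : α) : ℕ := #(univ.filter fun y => x ⋖ y)

lemma sum_ddeg_eq_sum_udeg : ∑ x : α, ddeg x = ∑ x : α, udeg x := by
  simp only [ddeg, udeg, card_filter]
  exact Finset.sum_comm

lemma degree_eq (x : α) : (coverGraph α).degree x = udeg x + ddeg x := by
  unfold SimpleGraph.degree
  have hsplit : (coverGraph α).neighborFinset x
      = (univ.filter fun y => x ⋖ y) ∪ (univ.filter fun y => y ⋖ x) := by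
    ext y
    simp only [SimpleGraph.mem_neighborFinset, mem_union, mem_filter, mem_univ, true_and]
    exact Iff.rfl
  rw [hsplit, card_union_of_disjoint, udeg, ddeg]
  rw [Finset.disjoint_left]
  intro y hy1 hy2
  simp only [mem_filter, mem_univ, true_and] at hy1 hy2
  exact hy1.lt.not_gt hy2.lt

lemma card_edgeFinset_eq_sum_ddeg :
    #(coverGraph α).edgeFinset = ∑ x : α, ddeg x := by
  have h := SimpleGraph.sum_degrees_eq_twice_card_edges (coverGraph α)
  have h2 : ∑ x : α, (coverGraph α).degree x = 2 * ∑ x : α, ddeg x := by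
    calc ∑ x : α, (coverGraph α).degree x = ∑ x : α, (udeg x + ddeg x) := by
          exact Finset.sum_congr rfl fun x _ => degree_eq x
      _ = (∑ x : α, udeg x) + ∑ x : α, ddeg x := Finset.sum_add_distrib
      _ = 2 * ∑ x : α, ddeg x := by rw [← sum_ddeg_eq_sum_udeg]; ring
  omega

lemma exists_le_cover {y x : α} (h : y < x) : ∃ u, y ≤ u ∧ u ⋖ x := by
  letI : LocallyFiniteOrder α := Fintype.toLocallyFiniteOrder
  exact exists_le_covBy_of_lt h

lemma exists_cover_le {y x : α} (h : x < y) : ∃ u, x ⋖ u ∧ u ≤ y := by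
  letI : LocallyFiniteOrder α := Fintype.toLocallyFiniteOrder
  exact exists_covBy_le_of_lt h

lemma sum_ddeg_ge (bot : α) (hbot : ∀ y : α, bot ≤ y) :
    #(univ.filter fun x : α => JoinReducible x) + (Fintype.card α - 1)
      ≤ ∑ x : α, ddeg x := by
  have key : ∀ x : α,
      (if JoinReducible x then 1 else 0) + (if x = bot then 0 else 1) ≤ ddeg x := by
    intro x
    by_cases hx : x = bot
    · have hnj : ¬ JoinReducible x := by
        rintro ⟨y, z, hy, _, hyz⟩
        exact hy (le_antisymm (hyz ▸ le_sup_left) (hx ▸ hbot y))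
      rw [if_neg hnj, if_pos hx]
      simp
    · by_cases hj : JoinReducible x
      · obtain ⟨y, z, hy, hz, hyz⟩ := hj
        have hyx : y < x := lt_of_le_of_ne (hyz ▸ le_sup_left) hy
        have hzx : z < x := lt_of_le_of_ne (hyz ▸ le_sup_right) hz
        obtain ⟨u, hyu, hux⟩ := exists_le_cover hyx
        obtain ⟨v, hzv, hvx⟩ := exists_le_cover hzx
        have huv : u ≠ v := by
          rintro rfl
          have : x ≤ u := hyz ▸ sup_le hyu hzv
          exact this.not_gt hux.lt
        have h2 : 1 < ddeg x := by
          apply Finset.one_lt_card.mpr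
          exact ⟨u, by simp [hux], v, by simp [hvx], huv⟩
        rw [if_pos (show JoinReducible x from ⟨y, z, hy, hz, hyz⟩), if_neg hx]
        omega
      · have hbx : bot < x := lt_of_le_of_ne (hbot x) (Ne.symm hx)
        obtain ⟨u, _, hux⟩ := exists_le_cover hbx
        have h1 : 0 < ddeg x := Finset.card_pos.mpr ⟨u, by simp [hux]⟩
        simp only [if_neg hj, if_neg hx]
        omega
  calc #(univ.filter fun x : α => JoinReducible x) + (Fintype.card α - 1)
      = ∑ x : α, ((if JoinReducible x then 1 else 0) + (if x = bot then 0 else 1)) := by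
        rw [Finset.sum_add_distrib]
        congr 1
        · rw [card_filter]
        · have : ∑ x : α, (if x = bot then 0 else 1)
              = ∑ x : α, (if x ≠ bot then 1 else 0) := by
            apply Finset.sum_congr rfl
            intro x _
            by_cases h : x = bot <;> simp [h]
          rw [this, ← card_filter, Finset.filter_ne', Finset.card_erase_of_mem (mem_univ bot),
            Finset.card_univ]
    _ ≤ ∑ x : α, ddeg x := Finset.sum_le_sum fun x _ => key x

lemma sum_udeg_ge (top : α) (htop : ∀ y : α, y ≤ top) :
    #(univ.filter fun x : α => MeetReducible x) + (Fintype.card α - 1)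
      ≤ ∑ x : α, udeg x := by
  have key : ∀ x : α,
      (if MeetReducible x then 1 else 0) + (if x = top then 0 else 1) ≤ udeg x := by
    intro x
    by_cases hx : x = top
    · have hnj : ¬ MeetReducible x := by
        rintro ⟨y, z, hy, _, hyz⟩
        exact hy (le_antisymm (hx ▸ htop y) (hyz ▸ inf_le_left))
      rw [if_neg hnj, if_pos hx]
      simp
    · by_cases hj : MeetReducible x
      · obtain ⟨y, z, hy, hz, hyz⟩ := hj
        have hyx : x < y := lt_of_le_of_ne (hyz ▸ inf_le_left) (Ne.symm hy)
        have hzx : x < z := lt_of_le_of_ne (hyz ▸ inf_le_right) (Ne.symm hz)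
        obtain ⟨u, hux, hyu⟩ := exists_cover_le hyx
        obtain ⟨v, hvx, hzv⟩ := exists_cover_le hzx
        have huv : u ≠ v := by
          rintro rfl
          have : u ≤ x := hyz ▸ le_inf hyu hzv
          exact this.not_gt hux.lt
        have h2 : 1 < udeg x := by
          apply Finset.one_lt_card.mpr
          exact ⟨u, by simp [hux], v, by simp [hvx], huv⟩
        rw [if_pos (show MeetReducible x from ⟨y, z, hy, hz, hyz⟩), if_neg hx]
        omega
      · have hbx : x < top := lt_of_le_of_ne (htop x) hx
        obtain ⟨u, hux, _⟩ := exists_cover_le hbx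
        have h1 : 0 < udeg x := Finset.card_pos.mpr ⟨u, by simp [hux]⟩
        simp only [if_neg hj, if_neg hx]
        omega
  calc #(univ.filter fun x : α => MeetReducible x) + (Fintype.card α - 1)
      = ∑ x : α, ((if MeetReducible x then 1 else 0) + (if x = top then 0 else 1)) := by
        rw [Finset.sum_add_distrib]
        congr 1
        · rw [card_filter]
        · have : ∑ x : α, (if x = top then 0 else 1)
              = ∑ x : α, (if x ≠ top then 1 else 0) := by
            apply Finset.sum_congr rfl
            intro x _
            by_cases h : x = top <;> simp [h]
          rw [this, ← card_filter, Finset.filter_ne', Finset.card_erase_of_mem (mem_univ top),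
            Finset.card_univ]
    _ ≤ ∑ x : α, udeg x := Finset.sum_le_sum fun x _ => key x

lemma sum_udeg_le_chain (top : α) (htop : ∀ y : α, y ≤ top)
    (hcomp : ∀ a b : α, a ≤ b ∨ b ≤ a) :
    ∑ x : α, udeg x ≤ Fintype.card α - 1 := by
  have key : ∀ x : α, udeg x ≤ if x = top then 0 else 1 := by
    intro x
    by_cases hx : x = top
    · have : udeg x = 0 := by
        rw [udeg, Finset.card_eq_zero, Finset.filter_eq_empty_iff]
        intro y _ h
        exact (h.lt).not_ge (hx ▸ htop y : y ≤ x)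
      rw [if_pos hx, this]
    · rw [if_neg hx]
      apply Finset.card_le_one.mpr
      intro y hy y' hy'
      simp only [mem_filter, mem_univ, true_and] at hy hy'
      rcases hcomp y y' with h | h
      · rcases eq_or_lt_of_le h with h | h
        · exact h
        · exact absurd h (hy'.2 hy.lt)
      · rcases eq_or_lt_of_le h with h | h
        · exact h.symm
        · exact absurd h (hy.2 hy'.lt)
  calc ∑ x : α, udeg x ≤ ∑ x : α, (if x = top then 0 else 1) :=
        Finset.sum_le_sum fun x _ => key x
    _ = ∑ x : α, (if x ≠ top then 1 else 0) := by
        apply Finset.sum_congr rfl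
        intro x _
        by_cases h : x = top <;> simp [h]
    _ = Fintype.card α - 1 := by
        rw [← card_filter, Finset.filter_ne', Finset.card_erase_of_mem (mem_univ top),
          Finset.card_univ]

lemma reach_bot (bot : α) (hbot : ∀ y : α, bot ≤ y) (x : α) :
    (coverGraph α).Reachable x bot := by
  induction x using WellFoundedLT.induction with
  | ind x ih =>
    rcases eq_or_ne x bot with rfl | hx
    · exact SimpleGraph.Reachable.refl _
    · obtain ⟨u, _, hux⟩ := exists_le_cover (lt_of_le_of_ne (hbot x) (Ne.symm hx))
      have hadj : (coverGraph α).Adj x u := Or.inr hux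
      exact hadj.reachable.trans (ih u hux.lt)

lemma components_card (bot : α) (hbot : ∀ y : α, bot ≤ y) :
    Nat.card (coverGraph α).ConnectedComponent = 1 := by
  rw [Nat.card_eq_one_iff_unique]
  constructor
  · constructor
    intro c c'
    refine SimpleGraph.ConnectedComponent.ind₂ (fun x y => ?_) c c'
    exact SimpleGraph.ConnectedComponent.sound
      ((reach_bot bot hbot x).trans (reach_bot bot hbot y).symm)
  · exact ⟨(coverGraph α).connectedComponentMk bot⟩

end Aux

/-- If `L` is a finite lattice whose cover graph has nullity `k ≥ 1`, then
`2 ≤ |Red(L)| ≤ 2k`. -/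
theorem stmt0 {α : Type*} [Lattice α] [Fintype α] (k : ℕ) (hk : 1 ≤ k)
    (hnull : nullity α = (k : ℤ)) :
    2 ≤ (RedSet α).ncard ∧ (RedSet α).ncard ≤ 2 * k := by
  classical
  cases isEmpty_or_nonempty α with
  | inl h =>
    exfalso
    have he : IsEmpty (Sym2 α) := by infer_instance
    have h1 : Nat.card (coverGraph α).edgeSet = 0 := by
      have : IsEmpty (coverGraph α).edgeSet := by infer_instance
      exact Nat.card_of_isEmpty
    have h2 : Nat.card α = 0 := Nat.card_of_isEmpty
    have h3 : Nat.card (coverGraph α).ConnectedComponent = 0 := by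
      have : IsEmpty (coverGraph α).ConnectedComponent :=
        ⟨fun c => c.ind fun v => isEmptyElim v⟩
      exact Nat.card_of_isEmpty
    rw [nullity, h1, h2, h3] at hnull
    omega
  | inr h =>
    letI : BoundedOrder α := Fintype.toBoundedOrder α
    set n := Fintype.card α with hn
    have hn1 : 1 ≤ n := Fintype.card_pos
    -- number of edges
    have hm : Nat.card (coverGraph α).edgeSet = (coverGraph α).edgeFinset.card := by
      rw [SimpleGraph.edgeFinset_card]
      exact Nat.card_eq_fintype_card
    set m := (coverGraph α).edgeFinset.card with hmdef
    have hcomp1 : Nat.card (coverGraph α).ConnectedComponent = 1 :=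
      components_card ⊥ (fun y => bot_le)
    have hnα : Nat.card α = n := Nat.card_eq_fintype_card
    rw [nullity, hm, hcomp1, hnα] at hnull
    -- hnull : (m : ℤ) - n + 1 = k
    have hmn : m = n - 1 + k := by omega
    have hmd : m = ∑ x : α, ddeg x := card_edgeFinset_eq_sum_ddeg
    have hmu : m = ∑ x : α, udeg x := hmd.trans sum_ddeg_eq_sum_udeg
    -- not a chain
    have hnotchain : ¬ ∀ a b : α, a ≤ b ∨ b ≤ a := by
      intro hcomp
      have := sum_udeg_le_chain (⊤ : α) (fun y => le_top) hcomp
      rw [← hmu] at this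
      omega
    push_neg at hnotchain
    obtain ⟨a, b, hab, hba⟩ := hnotchain
    -- lower bound
    have hlo : 2 ≤ (RedSet α).ncard := by
      have hj : JoinReducible (a ⊔ b) := by
        refine ⟨a, b, ?_, ?_, rfl⟩
        · intro hEq
          exact hba (hEq ▸ le_sup_right)
        · intro hEq
          exact hab (hEq ▸ le_sup_left)
      have hme : MeetReducible (a ⊓ b) := by
        refine ⟨a, b, ?_, ?_, rfl⟩
        · intro hEq
          exact hab (hEq ▸ inf_le_right : a ≤ b)
        · intro hEq
          exact hba (hEq ▸ inf_le_left : b ≤ a)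
      have hne : (a ⊓ b) ≠ (a ⊔ b) := by
        intro hEq
        exact hab ((le_sup_left.trans_eq hEq.symm).trans inf_le_right)
      have hsub : ({a ⊓ b, a ⊔ b} : Set α) ⊆ RedSet α := by
        rintro x (rfl | rfl)
        · exact Or.inr hme
        · exact Or.inl hj
      calc 2 = ({a ⊓ b, a ⊔ b} : Set α).ncard := (Set.ncard_pair hne).symm
        _ ≤ (RedSet α).ncard := Set.ncard_le_ncard hsub (Set.toFinite _)
    refine ⟨hlo, ?_⟩
    -- upper bound
    have hred : (RedSet α).ncard = (Finset.univ.filter fun x : α => Reducible x).card := by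
      rw [← Set.ncard_coe_finset]
      congr 1
      ext x
      simp [RedSet]
    have hsubf : (Finset.univ.filter fun x : α => Reducible x)
        ⊆ (Finset.univ.filter fun x : α => JoinReducible x)
          ∪ (Finset.univ.filter fun x : α => MeetReducible x) := by
      intro x hx
      simp only [Finset.mem_filter, Finset.mem_union, Finset.mem_univ, true_and] at hx ⊢
      exact hx
    have hcard : (Finset.univ.filter fun x : α => Reducible x).card
        ≤ (Finset.univ.filter fun x : α => JoinReducible x).card
          + (Finset.univ.filter fun x : α => MeetReducible x).card :=
      le_trans (Finset.card_le_card hsubf) (Finset.card_union_le _ _)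
    have hJ := sum_ddeg_ge (⊥ : α) (fun y => bot_le)
    have hM := sum_udeg_ge (⊤ : α) (fun y => le_top)
    rw [← hmd] at hJ
    rw [← hmu] at hM
    rw [hred]
    omega
end

section
/- A finite lattice is dismantlable if and only if it is an adjunct of chains, i.e., there exist chains C₀, C₁, …, C_k and adjunct pairs (aᵢ, bᵢ) such that L = C₀ ]^{b₁}_{a₁} C₁ ]^{b₂}_{a₂} C₂ ⋯ ]^{b_k}_{a_k} C_k. -/
/-- A subset of a lattice closed under meets and joins (a sublattice). -/
def IsSublatticeSet {α : Type*} [Lattice α] (s : Set α) : Prop :=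
  ∀ x ∈ s, ∀ y ∈ s, x ⊓ y ∈ s ∧ x ⊔ y ∈ s

/-- A finite lattice of order `n` is dismantlable if there is a chain
`L₁ ⊂ L₂ ⊂ ⋯ ⊂ Lₙ = L` of sublattices with `|Lᵢ| = i`. -/
def Dismantlable (α : Type*) [Lattice α] [Fintype α] : Prop :=
  ∃ f : ℕ → Set α,
    (∀ i, 1 ≤ i → i ≤ Fintype.card α → (f i).ncard = i ∧ IsSublatticeSet (f i)) ∧
    (∀ i, 1 ≤ i → i < Fintype.card α → f i ⊆ f (i + 1)) ∧
    f (Fintype.card α) = Set.univ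

/-- `AdjunctRep C₀ s l` : the subset `s`, with the order induced from the ambient
lattice, is an adjunct of chains starting with the chain `C₀`; the list `l` records, in
order, the adjoined chains together with their adjunct pairs, i.e.
`s = C₀ ]^{b₁}_{a₁} C₁ ]^{b₂}_{a₂} C₂ ⋯ ]^{b_k}_{a_k} C_k` with
`l = [(C₁,a₁,b₁), …, (C_k,a_k,b_k)]`.  In the step, the adjunct pair `(a,b)` lies in
the part `s` built so far, with `a < b` and `a` not covered by `b` in `s`, and the
ambient order on `s ∪ c` is exactly the adjunct order: for `x ∈ s` and `y ∈ c`,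
`x ≤ y ↔ x ≤ a` and `y ≤ x ↔ b ≤ x`. -/
inductive AdjunctRep {α : Type*} [Lattice α] (C₀ : Set α) :
    Set α → List (Set α × α × α) → Prop
  | base (hchain : IsChain (· ≤ ·) C₀) (hne : C₀.Nonempty) : AdjunctRep C₀ C₀ []
  | step {s : Set α} {l : List (Set α × α × α)} (c : Set α) (a b : α)
      (hs : AdjunctRep C₀ s l) (hc : IsChain (· ≤ ·) c) (hcne : c.Nonempty)
      (hdisj : Disjoint s c) (ha : a ∈ s) (hb : b ∈ s) (hab : a < b)
      (hnotcov : ∃ z ∈ s, a < z ∧ z < b)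
      (hord : ∀ x ∈ s, ∀ y ∈ c, (x ≤ y ↔ x ≤ a) ∧ (y ≤ x ↔ b ≤ x)) :
      AdjunctRep C₀ (s ∪ c) (l ++ [(c, a, b)])

section Aux
variable {α : Type*} [Lattice α]

lemma AdjunctRep.nonempty' {C₀ s : Set α} {l} (h : AdjunctRep C₀ s l) : s.Nonempty := by
  induction h with
  | base _ hne => exact hne
  | step c a b hs hc hcne hdisj ha hb hab hn hord ih => exact ih.mono Set.subset_union_left

lemma chain_sublattice {s : Set α} (h : IsChain (· ≤ ·) s) : IsSublatticeSet s := by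
  intro x hx y hy
  rcases eq_or_ne x y with rfl | hne
  · simpa using hx
  · rcases h hx hy hne with hle | hle
    · exact ⟨by rwa [inf_eq_left.mpr hle], by rwa [sup_eq_right.mpr hle]⟩
    · exact ⟨by rwa [inf_eq_right.mpr hle], by rwa [sup_eq_left.mpr hle]⟩

lemma insert_top {C₀ s : Set α} {l} (hs : AdjunctRep C₀ s l) (x : α) :
    x ∉ s → (∀ y ∈ s, y ≤ x) → ∃ C l', AdjunctRep C (insert x s) l' := by
  induction hs with
  | base hchain hne =>
    intro hx hle
    exact ⟨_, [], AdjunctRep.base (hchain.insert fun y hy _ => Or.inr (hle y hy))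
      (Set.insert_nonempty _ _)⟩
  | step c a b hs hc hcne hdisj ha hb hab hncov hord ih =>
    intro hx hle
    obtain ⟨C, l', hrep⟩ := ih (fun h => hx (Or.inl h)) (fun y hy => hle y (Or.inl hy))
    refine ⟨C, l' ++ [(c, a, b)], ?_⟩
    rw [← Set.insert_union]
    refine AdjunctRep.step c a b hrep hc hcne ?_ (Set.mem_insert_of_mem _ ha)
      (Set.mem_insert_of_mem _ hb) hab
      (hncov.imp fun z hz => ⟨Set.mem_insert_of_mem _ hz.1, hz.2⟩) ?_
    · rw [Set.disjoint_left]
      rintro y (rfl | hy) hyc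
      · exact hx (Or.inr hyc)
      · exact Set.disjoint_left.mp hdisj hy hyc
    · rintro x' (rfl | hx') y hy
      · constructor
        · constructor
          · intro h
            exact absurd (le_antisymm h (hle y (Or.inr hy)) ▸ Or.inr hy) hx
          · intro h
            exact absurd (le_antisymm h (hle a (Or.inl ha)) ▸ Or.inl ha) hx
        · simp [hle y (Or.inr hy), hle b (Or.inl hb)]
      · exact hord x' hx' y hy

lemma insert_bot {C₀ s : Set α} {l} (hs : AdjunctRep C₀ s l) (x : α) :
    x ∉ s → (∀ y ∈ s, x ≤ y) → ∃ C l', AdjunctRep C (insert x s) l' := by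
  induction hs with
  | base hchain hne =>
    intro hx hle
    exact ⟨_, [], AdjunctRep.base (hchain.insert fun y hy _ => Or.inl (hle y hy))
      (Set.insert_nonempty _ _)⟩
  | step c a b hs hc hcne hdisj ha hb hab hncov hord ih =>
    intro hx hle
    obtain ⟨C, l', hrep⟩ := ih (fun h => hx (Or.inl h)) (fun y hy => hle y (Or.inl hy))
    refine ⟨C, l' ++ [(c, a, b)], ?_⟩
    rw [← Set.insert_union]
    refine AdjunctRep.step c a b hrep hc hcne ?_ (Set.mem_insert_of_mem _ ha)
      (Set.mem_insert_of_mem _ hb) hab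
      (hncov.imp fun z hz => ⟨Set.mem_insert_of_mem _ hz.1, hz.2⟩) ?_
    · rw [Set.disjoint_left]
      rintro y (rfl | hy) hyc
      · exact hx (Or.inr hyc)
      · exact Set.disjoint_left.mp hdisj hy hyc
    · rintro x' (rfl | hx') y hy
      · refine ⟨by simp [hle y (Or.inr hy), hle a (Or.inl ha)], ?_⟩
        constructor
        · intro h
          exact absurd (le_antisymm (hle y (Or.inr hy)) h ▸ Or.inr hy) hx
        · intro h
          exact absurd (le_antisymm (hle b (Or.inl hb)) h ▸ Or.inl hb) hx
      · exact hord x' hx' y hy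
lemma insert_mid_cov {C₀ s : Set α} {l} (hs : AdjunctRep C₀ s l) (x d u : α) :
    x ∉ s → d ∈ s → u ∈ s → d < x → x < u →
    (∀ y ∈ s, y ≤ x ↔ y ≤ d) → (∀ y ∈ s, x ≤ y ↔ u ≤ y) →
    (¬ ∃ z ∈ s, d < z ∧ z < u) →
    ∃ C l', AdjunctRep C (insert x s) l' := by
  induction hs with
  | base hchain hne =>
    intro hx hd hu hdx hxu hD hU hz
    refine ⟨_, [], AdjunctRep.base (hchain.insert fun y hy hyx => ?_) (Set.insert_nonempty _ _)⟩
    rcases eq_or_ne y d with rfl | hyd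
    · exact Or.inr hdx.le
    rcases hchain hy hd hyd with h1 | h1
    · exact Or.inr (h1.trans hdx.le)
    rcases eq_or_ne y u with rfl | hyu
    · exact Or.inl hxu.le
    rcases hchain hy hu hyu with h2 | h2
    · exact absurd ⟨y, hy, lt_of_le_of_ne h1 (Ne.symm hyd), lt_of_le_of_ne h2 hyu⟩ hz
    · exact Or.inl (hxu.le.trans h2)
  | step c a b hs0 hc hcne hdisj ha hb hab hncov hord ih =>
    rename_i s0 l0
    intro hx hd hu hdx hxu hD hU hz
    have hx0 : x ∉ _ := fun h => hx (Or.inl h)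
    rcases hd with hd0 | hdc <;> rcases hu with hu0 | huc
    · -- d ∈ s₀, u ∈ s₀ : recurse
      obtain ⟨C, l', hrep⟩ := ih hx0 hd0 hu0 hdx hxu
        (fun y hy => hD y (Or.inl hy)) (fun y hy => hU y (Or.inl hy))
        (fun ⟨z, hz0, h⟩ => hz ⟨z, Or.inl hz0, h⟩)
      refine ⟨C, l' ++ [(c, a, b)], ?_⟩
      rw [← Set.insert_union]
      refine AdjunctRep.step c a b hrep hc hcne ?_ (Set.mem_insert_of_mem _ ha)
        (Set.mem_insert_of_mem _ hb) hab
        (hncov.imp fun z hz => ⟨Set.mem_insert_of_mem _ hz.1, hz.2⟩) ?_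
      · rw [Set.disjoint_left]
        rintro y (rfl | hy) hyc
        · exact hx (Or.inr hyc)
        · exact Set.disjoint_left.mp hdisj hy hyc
      · rintro x' (rfl | hx') y hy
        · constructor
          · exact (hU y (Or.inr hy)).trans
              (((hord u hu0 y hy).1).trans (hU a (Or.inl ha)).symm)
          · exact (hD y (Or.inr hy)).trans
              (((hord d hd0 y hy).2).trans (hD b (Or.inl hb)).symm)
        · exact hord x' hx' y hy
    · -- d ∈ s₀, u ∈ c
      have had : d ≤ a := (hord d hd0 u huc).1.mp (hdx.trans hxu).le
      have hau : a ≤ u := (hord a ha u huc).1.mpr le_rfl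
      have hane : a ≠ u := fun h => Set.disjoint_left.mp hdisj ha (h ▸ huc)
      have hda : a = d := by
        by_contra hne
        exact hz ⟨a, Or.inl ha, lt_of_le_of_ne had (Ne.symm hne), lt_of_le_of_ne hau hane⟩
      refine ⟨C₀, l0 ++ [(insert x c, a, b)], ?_⟩
      rw [← Set.union_insert]
      refine AdjunctRep.step (insert x c) a b hs0 (hc.insert fun y hy _ => ?_)
        (Set.insert_nonempty _ _) ?_ ha hb hab hncov ?_
      · -- chain: x ≤ y for all y ∈ c
        left
        have hay : a ≤ y := (hord a ha y hy).1.mpr le_rfl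
        rcases eq_or_ne y u with rfl | hyu
        · exact hxu.le
        rcases hc hy huc hyu with h2 | h2
        · exact absurd ⟨y, Or.inr hy, hda ▸ lt_of_le_of_ne hay
            (fun h => Set.disjoint_left.mp hdisj (h ▸ ha) hy), lt_of_le_of_ne h2 hyu⟩ hz
        · exact hxu.le.trans h2
      · rw [Set.disjoint_right]
        rintro y (rfl | hy)
        · exact hx0
        · exact Set.disjoint_right.mp hdisj hy
      · rintro x' hx' y (rfl | hy)
        · constructor
          · exact (hD x' (Or.inl hx')).trans (by rw [hda])
          · exact (hU x' (Or.inl hx')).trans (hord x' hx' u huc).2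
        · exact hord x' hx' y hy
    · -- d ∈ c, u ∈ s₀
      have hbu : b ≤ u := (hord u hu0 d hdc).2.mp (hdx.trans hxu).le
      have hdb : d ≤ b := (hord b hb d hdc).2.mpr le_rfl
      have hbne : b ≠ d := fun h => Set.disjoint_left.mp hdisj hb (h ▸ hdc)
      have hbu' : b = u := by
        by_contra hne
        exact hz ⟨b, Or.inl hb, lt_of_le_of_ne hdb (Ne.symm hbne), lt_of_le_of_ne hbu hne⟩
      refine ⟨C₀, l0 ++ [(insert x c, a, b)], ?_⟩
      rw [← Set.union_insert]
      refine AdjunctRep.step (insert x c) a b hs0 (hc.insert fun y hy _ => ?_)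
        (Set.insert_nonempty _ _) ?_ ha hb hab hncov ?_
      · -- chain: y ≤ x for all y ∈ c
        right
        have hyb : y ≤ b := (hord b hb y hy).2.mpr le_rfl
        rcases eq_or_ne y d with rfl | hyd
        · exact hdx.le
        rcases hc hy hdc hyd with h2 | h2
        · exact h2.trans hdx.le
        · exact absurd ⟨y, Or.inr hy, lt_of_le_of_ne h2 (Ne.symm hyd), hbu' ▸ lt_of_le_of_ne hyb
            (fun h => Set.disjoint_left.mp hdisj (h ▸ hb) hy)⟩ hz
      · rw [Set.disjoint_right]
        rintro y (rfl | hy)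
        · exact hx0
        · exact Set.disjoint_right.mp hdisj hy
      · rintro x' hx' y (rfl | hy)
        · constructor
          · exact (hD x' (Or.inl hx')).trans (hord x' hx' d hdc).1
          · exact (hU x' (Or.inl hx')).trans (by rw [hbu'])
        · exact hord x' hx' y hy
    · -- d ∈ c, u ∈ c
      refine ⟨C₀, l0 ++ [(insert x c, a, b)], ?_⟩
      rw [← Set.union_insert]
      refine AdjunctRep.step (insert x c) a b hs0 (hc.insert fun y hy _ => ?_)
        (Set.insert_nonempty _ _) ?_ ha hb hab hncov ?_
      · rcases eq_or_ne y d with rfl | hyd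
        · exact Or.inr hdx.le
        rcases hc hy hdc hyd with h1 | h1
        · exact Or.inr (h1.trans hdx.le)
        rcases eq_or_ne y u with rfl | hyu
        · exact Or.inl hxu.le
        rcases hc hy huc hyu with h2 | h2
        · exact absurd ⟨y, Or.inr hy, lt_of_le_of_ne h1 (Ne.symm hyd), lt_of_le_of_ne h2 hyu⟩ hz
        · exact Or.inl (hxu.le.trans h2)
      · rw [Set.disjoint_right]
        rintro y (rfl | hy)
        · exact hx0
        · exact Set.disjoint_right.mp hdisj hy
      · rintro x' hx' y (rfl | hy)
        · exact ⟨(hD x' (Or.inl hx')).trans (hord x' hx' d hdc).1,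
            (hU x' (Or.inl hx')).trans (hord x' hx' u huc).2⟩
        · exact hord x' hx' y hy

lemma insert_mid {C₀ s : Set α} {l} (hs : AdjunctRep C₀ s l) (x d u : α)
    (hx : x ∉ s) (hd : d ∈ s) (hu : u ∈ s) (hdx : d < x) (hxu : x < u)
    (hD : ∀ y ∈ s, y ≤ x ↔ y ≤ d) (hU : ∀ y ∈ s, x ≤ y ↔ u ≤ y) :
    ∃ C l', AdjunctRep C (insert x s) l' := by
  by_cases hz : ∃ z ∈ s, d < z ∧ z < u
  · refine ⟨C₀, l ++ [({x}, d, u)], ?_⟩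
    rw [← Set.union_singleton]
    refine AdjunctRep.step {x} d u hs (Set.subsingleton_singleton.isChain) ⟨x, rfl⟩
      (Set.disjoint_singleton_right.mpr hx) hd hu (hdx.trans hxu) hz ?_
    rintro x' hx' y rfl
    exact ⟨hD x' hx', hU x' hx'⟩
  · exact insert_mid_cov hs x d u hx hd hu hdx hxu hD hU hz
lemma forward_dir {α : Type*} [Lattice α] [Fintype α] [Nonempty α] (h : Dismantlable α) :
    ∃ (C₀ : Set α) (l : List (Set α × α × α)), AdjunctRep C₀ Set.univ l := by
  obtain ⟨f, h1, h2, h3⟩ := h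
  have hn : 1 ≤ Fintype.card α := Fintype.card_pos
  have claim : ∀ i, 1 ≤ i → i ≤ Fintype.card α → ∃ C l, AdjunctRep C (f i) l := by
    intro i hi
    induction i, hi using Nat.le_induction with
    | base =>
      intro _
      obtain ⟨t, ht⟩ := Set.ncard_eq_one.mp (h1 1 le_rfl hn).1
      rw [ht]
      exact ⟨{t}, [], AdjunctRep.base Set.subsingleton_singleton.isChain ⟨t, rfl⟩⟩
    | succ i hi ih =>
      intro hin
      have hilt : i < Fintype.card α := hin
      obtain ⟨C, l, hrep⟩ := ih hilt.le
      have hci : (f i).ncard = i := (h1 i hi hilt.le).1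
      have hsubi : IsSublatticeSet (f i) := (h1 i hi hilt.le).2
      have hci1 : (f (i+1)).ncard = i + 1 := (h1 (i+1) (by omega) hin).1
      have hsubi1 : IsSublatticeSet (f (i+1)) := (h1 (i+1) (by omega) hin).2
      have hss : f i ⊆ f (i+1) := h2 i hi hilt
      have hne : f i ≠ f (i+1) := fun h => by rw [h, hci1] at hci; omega
      obtain ⟨x, hx1, hx0⟩ := Set.exists_of_ssubset (hss.ssubset_of_ne hne)
      have heq : insert x (f i) = f (i+1) := by
        apply Set.eq_of_subset_of_ncard_le
        · exact Set.insert_subset hx1 hss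
        · rw [Set.ncard_insert_of_notMem hx0, hci, hci1]
        · exact Set.toFinite _
      rw [← heq]
      by_cases hUe : ∃ y ∈ f i, x ≤ y
      · by_cases hDe : ∃ y ∈ f i, y ≤ x
        · -- middle case
          obtain ⟨u, hu, humin⟩ := Set.Finite.exists_minimalFor id {y | y ∈ f i ∧ x ≤ y}
            (Set.toFinite _) (by obtain ⟨y, hy, hxy⟩ := hUe; exact ⟨y, hy, hxy⟩)
          obtain ⟨d, hd, hdmax⟩ := Set.Finite.exists_maximalFor id {y | y ∈ f i ∧ y ≤ x}
            (Set.toFinite _) (by obtain ⟨y, hy, hyx⟩ := hDe; exact ⟨y, hy, hyx⟩)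
          have humin' : ∀ y ∈ f i, x ≤ y → u ≤ y := by
            intro y hy hxy
            have hm : u ⊓ y ∈ f i := (hsubi u hu.1 y hy).1
            have : u = u ⊓ y := le_antisymm (humin (j := u ⊓ y) ⟨hm, le_inf hu.2 hxy⟩ inf_le_left) inf_le_left
            rw [this]; exact inf_le_right
          have hdmax' : ∀ y ∈ f i, y ≤ x → y ≤ d := by
            intro y hy hyx
            have hm : d ⊔ y ∈ f i := (hsubi d hd.1 y hy).2
            have : d = d ⊔ y := le_antisymm le_sup_left (hdmax (j := d ⊔ y) ⟨hm, sup_le hd.2 hyx⟩ le_sup_left)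
            rw [this]; exact le_sup_right
          refine insert_mid hrep x d u hx0 hd.1 hu.1
            (lt_of_le_of_ne hd.2 (fun h => hx0 (h ▸ hd.1)))
            (lt_of_le_of_ne hu.2 (fun h => hx0 (h.symm ▸ hu.1))) ?_ ?_
          · exact fun y hy => ⟨fun h => hdmax' y hy h, fun h => h.trans hd.2⟩
          · exact fun y hy => ⟨fun h => humin' y hy h, fun h => hu.2.trans h⟩
        · -- x is bottom
          refine insert_bot hrep x hx0 ?_
          intro y hy
          have hm : x ⊓ y ∈ f (i+1) := (hsubi1 x hx1 y (hss hy)).1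
          rw [← heq] at hm
          rcases hm with h | h
          · exact h ▸ inf_le_right
          · exact absurd ⟨x ⊓ y, h, inf_le_left⟩ hDe
      · -- x is top
        refine insert_top hrep x hx0 ?_
        intro y hy
        have hm : x ⊔ y ∈ f (i+1) := (hsubi1 x hx1 y (hss hy)).2
        rw [← heq] at hm
        rcases hm with h | h
        · exact h ▸ le_sup_right
        · exact absurd ⟨x ⊔ y, h, le_sup_left⟩ hUe
  obtain ⟨C, l, hrep⟩ := claim (Fintype.card α) hn le_rfl
  rw [h3] at hrep
  exact ⟨C, l, hrep⟩
lemma chain_max {α : Type*} [Lattice α] {c : Set α} (hc : IsChain (· ≤ ·) c)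
    (hfin : c.Finite) (hne : c.Nonempty) : ∃ M ∈ c, ∀ y ∈ c, y ≤ M := by
  obtain ⟨M, hM, hmax⟩ := Set.Finite.exists_maximalFor id c hfin hne
  refine ⟨M, hM, fun y hy => ?_⟩
  rcases eq_or_ne y M with rfl | hne'
  · exact le_rfl
  rcases hc hy hM hne' with h | h
  · exact h
  · exact hmax hy h

lemma rev_step {α : Type*} [Lattice α] {C s : Set α} {l} (hrep : AdjunctRep C s l)
    (hfin : s.Finite) (hsub : IsSublatticeSet s) (hcard : 2 ≤ s.ncard) :
    ∃ M ∈ s, (∃ C' l', AdjunctRep C' (s \ {M}) l') ∧ IsSublatticeSet (s \ {M}) := by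
  cases hrep with
  | base hchain hne =>
    obtain ⟨M, hM, hMmax⟩ := chain_max hchain hfin hne
    have hne' : (C \ {M}).Nonempty := by
      apply Set.nonempty_of_ncard_ne_zero
      rw [Set.ncard_diff_singleton_of_mem hM]
      omega
    exact ⟨M, hM, ⟨C \ {M}, [], AdjunctRep.base (hchain.mono Set.diff_subset) hne'⟩,
      chain_sublattice (hchain.mono Set.diff_subset)⟩
  | step c a b hs0 hc hcne hdisj ha hb hab hncov hord =>
    rename_i s0 l0
    obtain ⟨M, hMc, hMmax⟩ := chain_max hc (hfin.subset Set.subset_union_right) hcne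
    have hM : M ∈ s0 ∪ c := Or.inr hMc
    have hM0 : M ∉ s0 := Set.disjoint_right.mp hdisj hMc
    have hsM : (s0 ∪ c) \ {M} = s0 ∪ (c \ {M}) := by
      rw [Set.union_diff_distrib, Set.diff_singleton_eq_self hM0]
    refine ⟨M, hM, ?_, ?_⟩
    · rw [hsM]
      by_cases hcm : (c \ {M}).Nonempty
      · exact ⟨C, l0 ++ [(c \ {M}, a, b)], AdjunctRep.step (c \ {M}) a b hs0
          (hc.mono Set.diff_subset) hcm (hdisj.mono_right Set.diff_subset) ha hb hab hncov
          (fun x' h y hy => hord x' h y hy.1)⟩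
      · rw [Set.not_nonempty_iff_eq_empty.mp hcm, Set.union_empty]
        exact ⟨C, l0, hs0⟩
    · intro x hx y hy
      rw [Set.mem_diff, Set.mem_singleton_iff] at hx hy
      obtain ⟨hmm, hjj⟩ := hsub x hx.1 y hy.1
      refine ⟨⟨hmm, ?_⟩, ⟨hjj, ?_⟩⟩
      · -- x ⊓ y ≠ M
        rw [Set.mem_singleton_iff]
        intro hEq
        rcases hx.1 with hx0 | hxc <;> rcases hy.1 with hy0 | hyc
        · have hbx : b ≤ x := (hord x hx0 M hMc).2.mp (hEq ▸ inf_le_left)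
          have hby : b ≤ y := (hord y hy0 M hMc).2.mp (hEq ▸ inf_le_right)
          have : b ≤ M := hEq ▸ le_inf hbx hby
          exact hab.not_ge ((hord b hb M hMc).1.mp this)
        · exact hy.2 (le_antisymm (hMmax y hyc) (hEq ▸ inf_le_right))
        · exact hx.2 (le_antisymm (hMmax x hxc) (hEq ▸ inf_le_left))
        · rcases eq_or_ne x y with rfl | hne'
          · exact hx.2 (by rw [← hEq, inf_idem])
          rcases hc hxc hyc hne' with h | h
          · exact hx.2 (by rw [← hEq, inf_eq_left.mpr h])
          · exact hy.2 (by rw [← hEq, inf_eq_right.mpr h])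
      · -- x ⊔ y ≠ M
        rw [Set.mem_singleton_iff]
        intro hEq
        rcases hx.1 with hx0 | hxc <;> rcases hy.1 with hy0 | hyc
        · have hax : x ≤ a := (hord x hx0 M hMc).1.mp (hEq ▸ le_sup_left)
          have hay : y ≤ a := (hord y hy0 M hMc).1.mp (hEq ▸ le_sup_right)
          have : M ≤ a := hEq ▸ sup_le hax hay
          exact hab.not_ge ((hord a ha M hMc).2.mp this)
        · by_cases hxa : x ≤ a
          · have : x ≤ y := (hord x hx0 y hyc).1.mpr hxa
            exact hy.2 (by rw [← hEq, sup_eq_right.mpr this])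
          · exact hxa ((hord x hx0 M hMc).1.mp (hEq ▸ le_sup_left))
        · by_cases hya : y ≤ a
          · have : y ≤ x := (hord y hy0 x hxc).1.mpr hya
            exact hx.2 (by rw [← hEq, sup_eq_left.mpr this])
          · exact hya ((hord y hy0 M hMc).1.mp (hEq ▸ le_sup_right))
        · rcases eq_or_ne x y with rfl | hne'
          · exact hx.2 (by rw [← hEq, sup_idem])
          rcases hc hxc hyc hne' with h | h
          · exact hy.2 (by rw [← hEq, sup_eq_right.mpr h])
          · exact hx.2 (by rw [← hEq, sup_eq_left.mpr h])

lemma rev_dir {α : Type*} [Lattice α] [Fintype α] :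
    ∀ n (s : Set α), s.ncard = n → (∃ C l, AdjunctRep C s l) → IsSublatticeSet s →
    ∃ f : ℕ → Set α, (∀ i, 1 ≤ i → i ≤ n → (f i).ncard = i ∧ IsSublatticeSet (f i)) ∧
      (∀ i, 1 ≤ i → i < n → f i ⊆ f (i + 1)) ∧ f n = s := by
  intro n
  induction n using Nat.strong_induction_on with
  | _ n ih =>
    rintro s hn ⟨C, l, hrep⟩ hsub
    have hpos : 1 ≤ n := by
      rw [← hn]
      exact (Set.ncard_pos (Set.toFinite s)).mpr hrep.nonempty'
    rcases le_or_gt n 1 with h1 | h1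
    · have hn1 : n = 1 := le_antisymm h1 hpos
      subst hn1
      refine ⟨fun _ => s, ?_, ?_, rfl⟩
      · intro i hi1 hin
        have : i = 1 := le_antisymm hin hi1
        subst this
        exact ⟨hn, hsub⟩
      · intro i hi1 hin
        omega
    · obtain ⟨M, hM, ⟨C', l', hrep'⟩, hsub'⟩ := rev_step hrep (Set.toFinite s) hsub (by omega)
      have hcard' : (s \ {M}).ncard = n - 1 := by
        rw [Set.ncard_diff_singleton_of_mem hM, hn]
      obtain ⟨f, hf1, hf2, hf3⟩ := ih (n - 1) (by omega) _ hcard' ⟨C', l', hrep'⟩ hsub'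
      refine ⟨fun i => if i < n then f i else s, ?_, ?_, ?_⟩
      · intro i hi1 hin
        by_cases h : i < n
        · simpa [h] using hf1 i hi1 (by omega)
        · have : i = n := by omega
          simp [h, this, hn, hsub]
      · intro i hi1 hin
        by_cases h : i + 1 < n
        · simpa [hin, h] using hf2 i hi1 (by omega)
        · have hieq : i = n - 1 := by omega
          have h2 : ¬ (i + 1 < n) := h
          simp only [if_pos hin, if_neg h2]
          rw [hieq, hf3]
          exact Set.diff_subset
      · simp

end Aux

/-- A finite lattice is dismantlable if and only if it is an adjunct of chains. -/
theorem stmt3 {α : Type*} [Lattice α] [Fintype α] [Nonempty α] :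
    Dismantlable α ↔
      ∃ (C₀ : Set α) (l : List (Set α × α × α)), AdjunctRep C₀ Set.univ l := by
  constructor
  · exact forward_dir
  · rintro ⟨C, l, hrep⟩
    have hcard : (Set.univ : Set α).ncard = Fintype.card α := by
      rw [Set.ncard_univ, Nat.card_eq_fintype_card]
    obtain ⟨f, hf1, hf2, hf3⟩ := rev_dir (Fintype.card α) Set.univ hcard ⟨C, l, hrep⟩
      (fun x _ y _ => ⟨trivial, trivial⟩)
    exact ⟨f, hf1, hf2, hf3⟩
end

section
/- A finite dismantlable lattice with n elements has exactly n + r − 2 covering edges if and only if it is an adjunct of r chains. -/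
open Set

section AdjAux

variable {α : Type*} [Lattice α]

/-- Covering relation within a subset. -/
def CovIn (s : Set α) (p q : α) : Prop :=
  p ∈ s ∧ q ∈ s ∧ p < q ∧ ∀ z ∈ s, ¬(p < z ∧ z < q)

/-- The set of covering edges within a subset. -/
def EdgesIn (s : Set α) : Set (α × α) := {p | CovIn s p.1 p.2}

lemma covIn_mono {s t : Set α} (h : s ⊆ t) {p q : α} (hp : p ∈ s) (hq : q ∈ s)
    (hc : CovIn t p q) : CovIn s p q :=
  ⟨hp, hq, hc.2.2.1, fun z hz => hc.2.2.2 z (h hz)⟩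

lemma exists_cov_above {s : Set α} (hfin : s.Finite) {p g : α} (hp : p ∈ s) (hg : g ∈ s)
    (hpg : p < g) : ∃ z, CovIn s p z ∧ z ≤ g := by
  obtain ⟨z, hz, hmin⟩ := Set.Finite.exists_minimalFor id {w | w ∈ s ∧ p < w ∧ w ≤ g}
    (hfin.subset (fun w hw => hw.1)) ⟨g, hg, hpg, le_rfl⟩
  refine ⟨z, ⟨hp, hz.1, hz.2.1, fun w hw hc => ?_⟩, hz.2.2⟩
  have : id z = id w := le_antisymm (hmin ⟨hw, hc.1, hc.2.le.trans hz.2.2⟩ hc.2.le) hc.2.le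
  exact hc.2.ne' this

lemma exists_cov_below {s : Set α} (hfin : s.Finite) {p g : α} (hp : p ∈ s) (hg : g ∈ s)
    (hpg : p < g) : ∃ z, CovIn s z g ∧ p ≤ z := by
  obtain ⟨z, hz, hmax⟩ := Set.Finite.exists_maximalFor id {w | w ∈ s ∧ w < g ∧ p ≤ w}
    (hfin.subset (fun w hw => hw.1)) ⟨p, hp, hpg, le_rfl⟩
  refine ⟨z, ⟨hz.1, hg, hz.2.1, fun w hw hc => ?_⟩, hz.2.2⟩
  have : id z = id w := le_antisymm hc.1.le (hmax ⟨hw, hc.2, hz.2.2.trans hc.1.le⟩ hc.1.le)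
  exact hc.1.ne this

lemma chain_greatest {C : Set α} (hfin : C.Finite) (hne : C.Nonempty)
    (hC : IsChain (· ≤ ·) C) : ∃ g ∈ C, ∀ y ∈ C, y ≤ g := by
  obtain ⟨g, hg, hmax⟩ := Set.Finite.exists_maximalFor id C hfin hne
  refine ⟨g, hg, fun y hy => ?_⟩
  rcases eq_or_ne y g with rfl | hne'
  · exact le_rfl
  · rcases hC hy hg hne' with h | h
    · exact h
    · exact hmax hy h
lemma chain_least {C : Set α} (hfin : C.Finite) (hne : C.Nonempty)
    (hC : IsChain (· ≤ ·) C) : ∃ g ∈ C, ∀ y ∈ C, g ≤ y := by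
  obtain ⟨g, hg, hmin⟩ := Set.Finite.exists_minimalFor id C hfin hne
  refine ⟨g, hg, fun y hy => ?_⟩
  rcases eq_or_ne y g with rfl | hne'
  · exact le_rfl
  · rcases hC hy hg hne' with h | h
    · exact hmin hy h
    · exact h

lemma sublat_greatest {s : Set α} (hfin : s.Finite) (hne : s.Nonempty)
    (hs : IsSublatticeSet s) : ∃ g ∈ s, ∀ y ∈ s, y ≤ g := by
  obtain ⟨g, hg, hmax⟩ := Set.Finite.exists_maximalFor id s hfin hne
  refine ⟨g, hg, fun y hy => ?_⟩
  have hj : y ⊔ g ∈ s := (hs y hy g hg).2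
  have h2 : id g = id (y ⊔ g) := le_antisymm le_sup_right (hmax hj le_sup_right)
  calc y ≤ y ⊔ g := le_sup_left
  _ = g := (congrArg id h2).symm

/-- A finite chain has `ncard - 1` covering edges. -/
lemma chain_edges_ncard {C : Set α} (hfin : C.Finite) (hne : C.Nonempty)
    (hC : IsChain (· ≤ ·) C) : (EdgesIn C).ncard + 1 = C.ncard := by
  obtain ⟨g, hg, hgmax⟩ := chain_greatest hfin hne hC
  have himg : Prod.fst '' EdgesIn C = C \ {g} := by
    ext p
    constructor
    · rintro ⟨⟨q1, q2⟩, hq, rfl⟩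
      obtain ⟨h1, h2, h3, -⟩ := hq
      refine ⟨h1, fun hpg => ?_⟩
      have : q1 = g := by simpa using hpg
      exact absurd (lt_of_lt_of_le h3 (hgmax _ h2)) (by rw [this] at *; exact not_lt_of_ge le_rfl)
    · rintro ⟨hp, hpg⟩
      have hlt : p < g := lt_of_le_of_ne (hgmax _ hp) (by simpa using hpg)
      obtain ⟨z, hz, -⟩ := exists_cov_above hfin hp hg hlt
      exact ⟨(p, z), hz, rfl⟩
  have hinj : Set.InjOn Prod.fst (EdgesIn C) := by
    rintro ⟨p1, q1⟩ h1 ⟨p2, q2⟩ h2 h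
    simp only at h
    subst h
    have hc1 := h1; have hc2 := h2
    obtain ⟨-, hq1, hlt1, hcov1⟩ := hc1
    obtain ⟨-, hq2, hlt2, hcov2⟩ := hc2
    rcases eq_or_ne q1 q2 with rfl | hne'
    · rfl
    rcases hC hq1 hq2 hne' with h | h
    · exact absurd ⟨hlt1, lt_of_le_of_ne h hne'⟩ (hcov2 q1 hq1)
    · exact absurd ⟨hlt2, lt_of_le_of_ne h (Ne.symm hne')⟩ (hcov1 q2 hq2)
  have h1 : (EdgesIn C).ncard = (C \ {g}).ncard := by
    rw [← himg, Set.ncard_image_of_injOn hinj]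
  rw [h1, Set.ncard_diff_singleton_add_one hg hfin]

/-- Lower bound: a finite set with a greatest element has at least `ncard - 1` edges. -/
lemma edges_lower_bound {s : Set α} (hfin : s.Finite) {g : α} (hg : g ∈ s)
    (hgmax : ∀ y ∈ s, y ≤ g) : s.ncard ≤ (EdgesIn s).ncard + 1 := by
  have hsub : s \ {g} ⊆ Prod.fst '' EdgesIn s := by
    rintro p ⟨hp, hpg⟩
    have hlt : p < g := lt_of_le_of_ne (hgmax _ hp) (by simpa using hpg)
    obtain ⟨z, hz, -⟩ := exists_cov_above hfin hp hg hlt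
    exact ⟨(p, z), hz, rfl⟩
  have hEfin : (EdgesIn s).Finite :=
    (hfin.prod hfin).subset (fun p hp => ⟨hp.1, hp.2.1⟩)
  have h1 : (s \ {g}).ncard ≤ (Prod.fst '' EdgesIn s).ncard :=
    Set.ncard_le_ncard hsub (hEfin.image _)
  have h2 : (Prod.fst '' EdgesIn s).ncard ≤ (EdgesIn s).ncard :=
    Set.ncard_image_le hEfin
  have h3 := Set.ncard_diff_singleton_add_one hg hfin
  omega


lemma step_edges {s c : Set α} {a b m M : α}
    (hdisj : Disjoint s c) (ha : a ∈ s) (hb : b ∈ s) (hab : a < b)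
    (hnotcov : ∃ z ∈ s, a < z ∧ z < b)
    (hord : ∀ x ∈ s, ∀ y ∈ c, (x ≤ y ↔ x ≤ a) ∧ (y ≤ x ↔ b ≤ x))
    (hm : m ∈ c) (hmle : ∀ y ∈ c, m ≤ y) (hM : M ∈ c) (hMle : ∀ y ∈ c, y ≤ M) :
    EdgesIn (s ∪ c) = EdgesIn s ∪ EdgesIn c ∪ {(a, m), (M, b)} := by
  -- basic facts
  have hsc : ∀ x ∈ s, ∀ y ∈ c, x ≠ y := fun x hx y hy h =>
    Set.disjoint_left.mp hdisj hx (h ▸ hy)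
  have hay : ∀ y ∈ c, a < y := fun y hy =>
    lt_of_le_of_ne ((hord a ha y hy).1.mpr le_rfl) (hsc a ha y hy)
  have hyb : ∀ y ∈ c, y < b := fun y hy =>
    lt_of_le_of_ne ((hord b hb y hy).2.mpr le_rfl) (fun h => hsc b hb y hy h.symm)
  ext ⟨p, q⟩
  simp only [EdgesIn, Set.mem_setOf_eq, Set.mem_union, Set.mem_insert_iff,
    Set.mem_singleton_iff, Prod.mk.injEq]
  constructor
  · rintro ⟨hp, hq, hpq, hcov⟩
    rcases hp with hp | hp <;> rcases hq with hq | hq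
    · exact Or.inl (Or.inl ⟨hp, hq, hpq, fun z hz => hcov z (Or.inl hz)⟩)
    · -- p ∈ s, q ∈ c : p = a, q = m
      refine Or.inr (Or.inl ⟨?_, ?_⟩)
      · by_contra hpa
        have hpa' : p < a := lt_of_le_of_ne ((hord p hp q hq).1.mp hpq.le) hpa
        exact hcov a (Or.inl ha) ⟨hpa', hay q hq⟩
      · by_contra hqm
        have hmq : m < q := lt_of_le_of_ne (hmle q hq) (fun h => hqm h.symm)
        have hpm : p < m := lt_of_le_of_ne (le_trans ((hord p hp q hq).1.mp hpq.le)
          (hay m hm).le) (hsc p hp m hm)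
        exact hcov m (Or.inr hm) ⟨hpm, hmq⟩
    · -- p ∈ c, q ∈ s : p = M, q = b
      refine Or.inr (Or.inr ⟨?_, ?_⟩)
      · by_contra hpM
        have h1 : p < M := lt_of_le_of_ne (hMle p hp) hpM
        have h2 : M < q := lt_of_lt_of_le (hyb M hM) ((hord q hq p hp).2.mp hpq.le)
        exact hcov M (Or.inr hM) ⟨h1, h2⟩
      · by_contra hqb
        have h2 : b < q := lt_of_le_of_ne ((hord q hq p hp).2.mp hpq.le) (Ne.symm hqb)
        exact hcov b (Or.inl hb) ⟨hyb p hp, h2⟩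
    · exact Or.inl (Or.inr ⟨hp, hq, hpq, fun z hz => hcov z (Or.inr hz)⟩)
  · rintro ((⟨hp, hq, hpq, hcov⟩ | ⟨hp, hq, hpq, hcov⟩) | (⟨h1, h2⟩ | ⟨h1, h2⟩))
    · -- edge of s
      refine ⟨Or.inl hp, Or.inl hq, hpq, ?_⟩
      rintro z (hz | hz) ⟨h1, h2⟩
      · exact hcov z hz ⟨h1, h2⟩
      · -- z ∈ c between p and q : forces p = a, q = b, contradicting hnotcov
        have hpa : p ≤ a := (hord p hp z hz).1.mp h1.le
        have hbq : b ≤ q := (hord q hq z hz).2.mp h2.le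
        have hpa' : p = a := by
          by_contra h
          exact hcov a ha ⟨lt_of_le_of_ne hpa h, lt_of_lt_of_le hab hbq⟩
        have hqb' : q = b := by
          by_contra h
          exact hcov b hb ⟨hpa' ▸ hab, lt_of_le_of_ne hbq (Ne.symm h)⟩
        obtain ⟨w, hw, hw1, hw2⟩ := hnotcov
        exact hcov w hw ⟨hpa' ▸ hw1, hqb' ▸ hw2⟩
    · -- edge of c
      refine ⟨Or.inr hp, Or.inr hq, hpq, ?_⟩
      rintro z (hz | hz) ⟨h1, h2⟩
      · have hbz : b ≤ z := (hord z hz p hp).2.mp h1.le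
        have hza : z ≤ a := (hord z hz q hq).1.mp h2.le
        exact absurd (lt_of_lt_of_le hab (le_trans hbz hza)) (lt_irrefl a)
      · exact hcov z hz ⟨h1, h2⟩
    · -- (a, m)
      subst h1; subst h2
      refine ⟨Or.inl ha, Or.inr hm, hay q hm, ?_⟩
      rintro z (hz | hz) ⟨h1, h2⟩
      · exact absurd (lt_of_lt_of_le h1 ((hord z hz q hm).1.mp h2.le)) (lt_irrefl p)
      · exact absurd (lt_of_lt_of_le h2 (hmle z hz)) (lt_irrefl z)
    · -- (M, b)
      subst h1; subst h2
      refine ⟨Or.inr hM, Or.inl hb, hyb p hM, ?_⟩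
      rintro z (hz | hz) ⟨h1, h2⟩
      · exact absurd (lt_of_le_of_lt ((hord z hz p hM).2.mp h1.le) h2) (lt_irrefl q)
      · exact absurd (lt_of_le_of_lt (hMle z hz) h1) (lt_irrefl z)

end AdjAux

lemma adjunct_count {α : Type*} [Lattice α] [Fintype α] {C₀ s : Set α}
    {l : List (Set α × α × α)} (h : AdjunctRep C₀ s l) :
    (EdgesIn s).ncard + 1 = s.ncard + l.length := by
  induction h with
  | base hchain hne => simpa using chain_edges_ncard (Set.toFinite _) hne hchain
  | step c a b hs hc hcne hdisj ha hb hab hnotcov hord ih =>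
    rename_i s' l'
    obtain ⟨m, hm, hmle⟩ := chain_least (Set.toFinite c) hcne hc
    obtain ⟨M, hM, hMle⟩ := chain_greatest (Set.toFinite c) hcne hc
    have hEq := step_edges hdisj ha hb hab hnotcov hord hm hmle hM hMle
    have hcc : (EdgesIn c).ncard + 1 = c.ncard := chain_edges_ncard (Set.toFinite _) hcne hc
    have hd1 : Disjoint (EdgesIn s') (EdgesIn c) := by
      rw [Set.disjoint_left]
      rintro ⟨p, q⟩ hp hq
      exact Set.disjoint_left.mp hdisj hp.1 hq.1
    have hd2 : Disjoint (EdgesIn s' ∪ EdgesIn c) ({((a, m) : α × α), (M, b)}) := by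
      rw [Set.disjoint_left]
      rintro ⟨p, q⟩ hp hq
      simp only [Set.mem_insert_iff, Set.mem_singleton_iff, Prod.mk.injEq] at hq
      rcases hp with hp | hp
      · rcases hq with ⟨h1, h2⟩ | ⟨h1, h2⟩
        · exact Set.disjoint_left.mp hdisj hp.2.1 (h2 ▸ hm)
        · exact Set.disjoint_left.mp hdisj hp.1 (h1 ▸ hM)
      · rcases hq with ⟨h1, h2⟩ | ⟨h1, h2⟩
        · exact Set.disjoint_left.mp hdisj (h1 ▸ ha) hp.1
        · exact Set.disjoint_left.mp hdisj (h2 ▸ hb) hp.2.1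
    have hne' : ((a, m) : α × α) ≠ (M, b) := by
      intro h
      have : a = M := congrArg Prod.fst h
      exact Set.disjoint_left.mp hdisj ha (this ▸ hM)
    have h1 : (EdgesIn (s' ∪ c)).ncard =
        (EdgesIn s').ncard + (EdgesIn c).ncard + 2 := by
      rw [hEq, Set.ncard_union_eq hd2 (Set.toFinite _) (Set.toFinite _),
        Set.ncard_union_eq hd1 (Set.toFinite _) (Set.toFinite _), Set.ncard_pair hne']
    have h2 : (s' ∪ c).ncard = s'.ncard + c.ncard :=
      Set.ncard_union_eq hdisj (Set.toFinite _) (Set.toFinite _)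
    simp only [List.length_append, List.length_cons, List.length_nil]
    omega

lemma adjunct_insert_bot {α : Type*} [Lattice α] {C₀ s : Set α}
    {l : List (Set α × α × α)} (h : AdjunctRep C₀ s l) (x : α)
    (hx : x ∉ s) (hle : ∀ y ∈ s, x ≤ y) :
    AdjunctRep (insert x C₀) (insert x s) l := by
  induction h with
  | base hchain hne =>
    exact AdjunctRep.base (hchain.insert fun y hy _ => Or.inl (hle y hy))
      (hne.mono (Set.subset_insert _ _))
  | step c a b hs hc hcne hdisj ha hb hab hnotcov hord ih =>
    rename_i s' l'
    have hxs : x ∉ s' := fun h => hx (Set.mem_union_left _ h)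
    have hxc : x ∉ c := fun h => hx (Set.mem_union_right _ h)
    rw [show insert x (s' ∪ c) = insert x s' ∪ c from Set.insert_union.symm]
    refine AdjunctRep.step c a b (ih hxs (fun y hy => hle y (Set.mem_union_left _ hy)))
      hc hcne ?_ (Set.mem_insert_of_mem _ ha) (Set.mem_insert_of_mem _ hb) hab ?_ ?_
    · refine Set.disjoint_left.mpr ?_
      rintro p (rfl | hp) hpc
      · exact hxc hpc
      · exact Set.disjoint_left.mp hdisj hp hpc
    · obtain ⟨z, hz, h1, h2⟩ := hnotcov
      exact ⟨z, Set.mem_insert_of_mem _ hz, h1, h2⟩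
    · rintro x' (rfl | hx') y hy
      · constructor
        · exact iff_of_true (hle y (Set.mem_union_right _ hy)) (hle a (Set.mem_union_left _ ha))
        · refine iff_of_false (fun hyx => ?_) (fun hbx => ?_)
          · exact hxc (le_antisymm hyx (hle y (Set.mem_union_right _ hy)) ▸ hy)
          · exact hxs (le_antisymm hbx (hle b (Set.mem_union_left _ hb)) ▸ hb)
      · exact hord x' hx' y hy

lemma adjunct_insert_top {α : Type*} [Lattice α] {C₀ s : Set α}
    {l : List (Set α × α × α)} (h : AdjunctRep C₀ s l) (x : α)
    (hx : x ∉ s) (hle : ∀ y ∈ s, y ≤ x) :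
    AdjunctRep (insert x C₀) (insert x s) l := by
  induction h with
  | base hchain hne =>
    exact AdjunctRep.base (hchain.insert fun y hy _ => Or.inr (hle y hy))
      (hne.mono (Set.subset_insert _ _))
  | step c a b hs hc hcne hdisj ha hb hab hnotcov hord ih =>
    rename_i s' l'
    have hxs : x ∉ s' := fun h => hx (Set.mem_union_left _ h)
    have hxc : x ∉ c := fun h => hx (Set.mem_union_right _ h)
    rw [show insert x (s' ∪ c) = insert x s' ∪ c from Set.insert_union.symm]
    refine AdjunctRep.step c a b (ih hxs (fun y hy => hle y (Set.mem_union_left _ hy)))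
      hc hcne ?_ (Set.mem_insert_of_mem _ ha) (Set.mem_insert_of_mem _ hb) hab ?_ ?_
    · refine Set.disjoint_left.mpr ?_
      rintro p (rfl | hp) hpc
      · exact hxc hpc
      · exact Set.disjoint_left.mp hdisj hp hpc
    · obtain ⟨z, hz, h1, h2⟩ := hnotcov
      exact ⟨z, Set.mem_insert_of_mem _ hz, h1, h2⟩
    · rintro x' (rfl | hx') y hy
      · constructor
        · refine iff_of_false (fun hxy => ?_) (fun hxa => ?_)
          · exact hxc (le_antisymm (hle y (Set.mem_union_right _ hy)) hxy ▸ hy)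
          · exact hxs (le_antisymm (hle a (Set.mem_union_left _ ha)) hxa ▸ ha)
        · exact iff_of_true (hle y (Set.mem_union_right _ hy)) (hle b (Set.mem_union_left _ hb))
      · exact hord x' hx' y hy

lemma adjunct_insert_mid {α : Type*} [Lattice α] {C₀ s : Set α}
    {l : List (Set α × α × α)} (h : AdjunctRep C₀ s l) {x d u : α}
    (hx : x ∉ s) (hcov : CovIn s d u) (hdx : d < x) (hxu : x < u)
    (hbelow : ∀ y ∈ s, (y ≤ x ↔ y ≤ d))
    (habove : ∀ y ∈ s, (x ≤ y ↔ u ≤ y)) :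
    ∃ C₀' l', AdjunctRep C₀' (insert x s) l' ∧ l'.length = l.length := by
  revert hx hcov hbelow habove
  induction h with
  | base hchain hne =>
    intro hx hcov hbelow habove
    have hd0 := hcov.1
    have hu0 := hcov.2.1
    refine ⟨insert x C₀, [], AdjunctRep.base ?_ (hne.mono (Set.subset_insert _ _)), rfl⟩
    refine hchain.insert fun y hy _ => ?_
    rcases eq_or_ne y d with rfl | hyd
    · exact Or.inr hdx.le
    rcases hchain hy hd0 hyd with h1 | h1
    · exact Or.inr (h1.trans hdx.le)
    · have hdy : d < y := lt_of_le_of_ne h1 (Ne.symm hyd)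
      rcases eq_or_ne y u with rfl | hyu
      · exact Or.inl hxu.le
      rcases hchain hy hu0 hyu with h2 | h2
      · exact absurd ⟨hdy, lt_of_le_of_ne h2 hyu⟩ (hcov.2.2.2 y hy)
      · exact Or.inl (hxu.le.trans h2)
  | step c a b hs hc hcne hdisj ha hb hab hnotcov hord ih =>
    rename_i s' l'
    intro hx hcov hbelow habove
    have hxs' : x ∉ s' := fun h => hx (Set.mem_union_left _ h)
    have hxc : x ∉ c := fun h => hx (Set.mem_union_right _ h)
    have hsc : ∀ p ∈ s', p ∉ c := fun p hp => Set.disjoint_left.mp hdisj hp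
    have hltu : d < u := hcov.2.2.1
    rcases hcov.1 with hd | hd <;> rcases hcov.2.1 with hu | hu
    · -- Case A : d ∈ s', u ∈ s'
      have hcov' : CovIn s' d u :=
        ⟨hd, hu, hltu, fun z hz => hcov.2.2.2 z (Set.mem_union_left _ hz)⟩
      obtain ⟨C₀', l'', hrep, hlen⟩ := ih hxs' hcov'
        (fun y hy => hbelow y (Set.mem_union_left _ hy))
        (fun y hy => habove y (Set.mem_union_left _ hy))
      refine ⟨C₀', l'' ++ [(c, a, b)], ?_, by simp [hlen]⟩
      rw [show insert x (s' ∪ c) = insert x s' ∪ c from Set.insert_union.symm]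
      refine AdjunctRep.step c a b hrep hc hcne ?_ (Set.mem_insert_of_mem _ ha)
        (Set.mem_insert_of_mem _ hb) hab ?_ ?_
      · refine Set.disjoint_left.mpr ?_
        rintro p (rfl | hp) hpc
        · exact hxc hpc
        · exact hsc p hp hpc
      · obtain ⟨z, hz, h1, h2⟩ := hnotcov
        exact ⟨z, Set.mem_insert_of_mem _ hz, h1, h2⟩
      · rintro x' (rfl | hx') y hy
        · constructor
          · exact (habove y (Set.mem_union_right _ hy)).trans
              ((hord u hu y hy).1.trans (habove a (Set.mem_union_left _ ha)).symm)
          · exact (hbelow y (Set.mem_union_right _ hy)).trans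
              ((hord d hd y hy).2.trans (hbelow b (Set.mem_union_left _ hb)).symm)
        · exact hord x' hx' y hy
    · -- Case C : d ∈ s', u ∈ c
      have hda : d = a := by
        by_contra hne'
        have h1 : d ≤ a := (hord d hd u hu).1.mp hltu.le
        have hau : a < u := lt_of_le_of_ne ((hord a ha u hu).1.mpr le_rfl)
          (fun h => hsc a ha (h ▸ hu))
        exact hcov.2.2.2 a (Set.mem_union_left _ ha) ⟨lt_of_le_of_ne h1 hne', hau⟩
      have humin : ∀ y ∈ c, u ≤ y := by
        intro y hy
        rcases eq_or_ne y u with rfl | hyu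
        · exact le_rfl
        rcases hc hy hu hyu with h1 | h1
        · have hdy : d < y := lt_of_le_of_ne (hda ▸ (hord a ha y hy).1.mpr le_rfl)
            (fun h => hsc d hd (h ▸ hy))
          exact absurd ⟨hdy, lt_of_le_of_ne h1 hyu⟩ (hcov.2.2.2 y (Set.mem_union_right _ hy))
        · exact h1
      refine ⟨C₀, l' ++ [(insert x c, a, b)], ?_, by simp⟩
      rw [show insert x (s' ∪ c) = s' ∪ insert x c from (Set.union_insert).symm]
      refine AdjunctRep.step (insert x c) a b hs
        (hc.insert fun y hy _ => Or.inl (hxu.le.trans (humin y hy)))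
        ⟨x, Set.mem_insert _ _⟩ ?_ ha hb hab hnotcov ?_
      · refine Set.disjoint_right.mpr ?_
        rintro p (rfl | hp) hps
        · exact hxs' hps
        · exact hsc p hps hp
      · rintro x' hx' y (rfl | hy)
        · constructor
          · exact (hbelow x' (Set.mem_union_left _ hx')).trans (by rw [hda])
          · exact (habove x' (Set.mem_union_left _ hx')).trans ((hord x' hx' u hu).2)
        · exact hord x' hx' y hy
    · -- Case D : d ∈ c, u ∈ s'
      have hub : u = b := by
        by_contra hne'
        have h1 : b ≤ u := (hord u hu d hd).2.mp hltu.le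
        have hdb : d < b := lt_of_le_of_ne ((hord b hb d hd).2.mpr le_rfl)
          (fun h => hsc b hb (h ▸ hd))
        exact hcov.2.2.2 b (Set.mem_union_left _ hb) ⟨hdb, lt_of_le_of_ne h1 (Ne.symm hne')⟩
      have hdmax : ∀ y ∈ c, y ≤ d := by
        intro y hy
        rcases eq_or_ne y d with rfl | hyd
        · exact le_rfl
        rcases hc hy hd hyd with h1 | h1
        · exact h1
        · have hyu : y < u := lt_of_le_of_ne (hub ▸ (hord b hb y hy).2.mpr le_rfl)
            (fun h => hsc u hu (h ▸ hy))
          exact absurd ⟨lt_of_le_of_ne h1 (Ne.symm hyd), hyu⟩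
            (hcov.2.2.2 y (Set.mem_union_right _ hy))
      refine ⟨C₀, l' ++ [(insert x c, a, b)], ?_, by simp⟩
      rw [show insert x (s' ∪ c) = s' ∪ insert x c from (Set.union_insert).symm]
      refine AdjunctRep.step (insert x c) a b hs
        (hc.insert fun y hy _ => Or.inr ((hdmax y hy).trans hdx.le))
        ⟨x, Set.mem_insert _ _⟩ ?_ ha hb hab hnotcov ?_
      · refine Set.disjoint_right.mpr ?_
        rintro p (rfl | hp) hps
        · exact hxs' hps
        · exact hsc p hps hp
      · rintro x' hx' y (rfl | hy)
        · constructor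
          · exact (hbelow x' (Set.mem_union_left _ hx')).trans ((hord x' hx' d hd).1)
          · exact (habove x' (Set.mem_union_left _ hx')).trans (by rw [hub])
        · exact hord x' hx' y hy
    · -- Case B : d ∈ c, u ∈ c
      have hkey : ∀ y ∈ c, y ≤ d ∨ u ≤ y := by
        intro y hy
        rcases eq_or_ne y d with rfl | hyd
        · exact Or.inl le_rfl
        rcases hc hy hd hyd with h1 | h1
        · exact Or.inl h1
        · have hdy : d < y := lt_of_le_of_ne h1 (Ne.symm hyd)
          rcases eq_or_ne y u with rfl | hyu
          · exact Or.inr le_rfl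
          rcases hc hy hu hyu with h2 | h2
          · exact absurd ⟨hdy, lt_of_le_of_ne h2 hyu⟩
              (hcov.2.2.2 y (Set.mem_union_right _ hy))
          · exact Or.inr h2
      refine ⟨C₀, l' ++ [(insert x c, a, b)], ?_, by simp⟩
      rw [show insert x (s' ∪ c) = s' ∪ insert x c from (Set.union_insert).symm]
      refine AdjunctRep.step (insert x c) a b hs
        (hc.insert fun y hy _ => (hkey y hy).elim (fun h => Or.inr (h.trans hdx.le)) (fun h => Or.inl (hxu.le.trans h)))
        ⟨x, Set.mem_insert _ _⟩ ?_ ha hb hab hnotcov ?_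
      · refine Set.disjoint_right.mpr ?_
        rintro p (rfl | hp) hps
        · exact hxs' hps
        · exact hsc p hps hp
      · rintro x' hx' y (rfl | hy)
        · constructor
          · exact (hbelow x' (Set.mem_union_left _ hx')).trans ((hord x' hx' d hd).1)
          · exact (habove x' (Set.mem_union_left _ hx')).trans ((hord x' hx' u hu).2)
        · exact hord x' hx' y hy
lemma forward_main {α : Type*} [Lattice α] [Fintype α] (f : ℕ → Set α)
    (hf1 : ∀ i, 1 ≤ i → i ≤ Fintype.card α → (f i).ncard = i ∧ IsSublatticeSet (f i))
    (hf2 : ∀ i, 1 ≤ i → i < Fintype.card α → f i ⊆ f (i + 1)) :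
    ∀ i, 1 ≤ i → i ≤ Fintype.card α → ∀ r, (EdgesIn (f i)).ncard + 2 = i + r →
      ∃ C₀ l, AdjunctRep C₀ (f i) l ∧ l.length + 1 = r := by
  intro i hi1
  induction i, hi1 using Nat.le_induction with
  | base =>
    intro h1card r hr
    obtain ⟨hcard, hsub⟩ := hf1 1 le_rfl h1card
    obtain ⟨x₀, hx₀⟩ := Set.ncard_eq_one.mp hcard
    have hE : EdgesIn (f 1) = ∅ := by
      ext ⟨p, q⟩
      simp only [EdgesIn, CovIn, Set.mem_setOf_eq, Set.mem_empty_iff_false, iff_false, not_and]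
      intro hp hq hpq
      rw [hx₀, Set.mem_singleton_iff] at hp hq
      exact absurd (hp ▸ hq ▸ hpq) (lt_irrefl _)
    rw [hE, Set.ncard_empty] at hr
    have hr1 : r = 1 := by omega
    refine ⟨f 1, [], AdjunctRep.base ?_ ⟨x₀, hx₀ ▸ rfl⟩, by simp [hr1]⟩
    rw [hx₀]
    exact Set.subsingleton_singleton.isChain
  | succ i hi ih =>
    intro hcard r hr
    have hile : i ≤ Fintype.card α := le_trans (Nat.le_succ i) hcard
    obtain ⟨hci, hsubi⟩ := hf1 i hi hile
    obtain ⟨hci1, hsubi1⟩ := hf1 (i + 1) (by omega) hcard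
    have hsubset : f i ⊆ f (i + 1) := hf2 i hi (by omega)
    have hdiff : (f (i + 1) \ f i).ncard = 1 := by
      rw [Set.ncard_diff hsubset (Set.toFinite _), hci1, hci]
      omega
    obtain ⟨x, hxeq⟩ := Set.ncard_eq_one.mp hdiff
    have hxmemd : x ∈ f (i + 1) \ f i := by rw [hxeq]; rfl
    have hxmem : x ∈ f (i + 1) := hxmemd.1
    have hxnot : x ∉ f i := hxmemd.2
    have hmem_lower : ∀ y ∈ f (i + 1), y ≠ x → y ∈ f i := by
      intro y hy hyx
      by_contra h
      have : y ∈ f (i + 1) \ f i := ⟨hy, h⟩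
      rw [hxeq, Set.mem_singleton_iff] at this
      exact hyx this
    have hins : f (i + 1) = insert x (f i) := by
      ext y
      constructor
      · intro hy
        rcases eq_or_ne y x with rfl | hyx
        · exact Set.mem_insert _ _
        · exact Set.mem_insert_of_mem _ (hmem_lower y hy hyx)
      · rintro (rfl | hy)
        · exact hxmem
        · exact hsubset hy
    have hine : (f i).Nonempty := by
      rw [← Set.ncard_pos (Set.toFinite _), hci]; omega
    -- uniqueness of covers of x
    have cov_lower_unique : ∀ z w, CovIn (f (i + 1)) z x → CovIn (f (i + 1)) w x → z = w := by
      intro z w hz hw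
      by_contra hne'
      have hzi : z ∈ f i := hmem_lower z hz.1 hz.2.2.1.ne
      have hwi : w ∈ f i := hmem_lower w hw.1 hw.2.2.1.ne
      have hj : z ⊔ w ∈ f i := (hsubi z hzi w hwi).2
      have hjlt : z ⊔ w < x := lt_of_le_of_ne (sup_le hz.2.2.1.le hw.2.2.1.le)
        (fun h => hxnot (h ▸ hj))
      rcases lt_or_eq_of_le (le_sup_left : z ≤ z ⊔ w) with h | h
      · exact hz.2.2.2 _ (hsubset hj) ⟨h, hjlt⟩
      · have hwz : w < z := lt_of_le_of_ne (h ▸ le_sup_right) (fun e => hne' e.symm)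
        exact hw.2.2.2 z hz.1 ⟨hwz, hz.2.2.1⟩
    have cov_upper_unique : ∀ z w, CovIn (f (i + 1)) x z → CovIn (f (i + 1)) x w → z = w := by
      intro z w hz hw
      by_contra hne'
      have hzi : z ∈ f i := hmem_lower z hz.2.1 hz.2.2.1.ne'
      have hwi : w ∈ f i := hmem_lower w hw.2.1 hw.2.2.1.ne'
      have hj : z ⊓ w ∈ f i := (hsubi z hzi w hwi).1
      have hjgt : x < z ⊓ w := lt_of_le_of_ne (le_inf hz.2.2.1.le hw.2.2.1.le)
        (fun h => hxnot (h ▸ hj))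
      rcases lt_or_eq_of_le (inf_le_left : z ⊓ w ≤ z) with h | h
      · exact hz.2.2.2 _ (hsubset hj) ⟨hjgt, h⟩
      · have hzw : z < w := lt_of_le_of_ne (h ▸ inf_le_right) hne'
        exact hw.2.2.2 z hz.2.1 ⟨hz.2.2.1, hzw⟩
    have below_iff : ∀ d, CovIn (f (i + 1)) d x → ∀ y ∈ f i, (y ≤ x ↔ y ≤ d) := by
      intro d hd y hy
      constructor
      · intro hyx
        have hylt : y < x := lt_of_le_of_ne hyx (fun e => hxnot (e ▸ hy))
        obtain ⟨z, hz, hyz⟩ := exists_cov_below (Set.toFinite _) (hsubset hy) hxmem hylt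
        exact (cov_lower_unique z d hz hd) ▸ hyz
      · intro hyd
        exact hyd.trans hd.2.2.1.le
    have above_iff : ∀ u, CovIn (f (i + 1)) x u → ∀ y ∈ f i, (x ≤ y ↔ u ≤ y) := by
      intro u hu y hy
      constructor
      · intro hxy
        have hylt : x < y := lt_of_le_of_ne hxy (fun e => hxnot (e ▸ hy))
        obtain ⟨z, hz, hyz⟩ := exists_cov_above (Set.toFinite _) hxmem (hsubset hy) hylt
        exact (cov_upper_unique z u hz hu) ▸ hyz
      · intro hyd
        exact hu.2.2.1.le.trans hyd
    by_cases hlow : ∃ y ∈ f (i + 1), y < x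
    · by_cases hhigh : ∃ y ∈ f (i + 1), x < y
      · -- main case : x has lower cover d and upper cover u
        obtain ⟨y1, hy1, hy1x⟩ := hlow
        obtain ⟨d, hdcov, -⟩ := exists_cov_below (Set.toFinite _) hy1 hxmem hy1x
        obtain ⟨y2, hy2, hxy2⟩ := hhigh
        obtain ⟨u, hucov, -⟩ := exists_cov_above (Set.toFinite _) hxmem hy2 hxy2
        have hdi : d ∈ f i := hmem_lower d hdcov.1 hdcov.2.2.1.ne
        have hui : u ∈ f i := hmem_lower u hucov.2.1 hucov.2.2.1.ne'
        have hdu : d < u := hdcov.2.2.1.trans hucov.2.2.1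
        have hbel := below_iff d hdcov
        have habv := above_iff u hucov
        have hE : EdgesIn (f (i + 1)) =
            insert (d, x) (insert (x, u) (EdgesIn (f i) \ {(d, u)})) := by
          ext ⟨p, q⟩
          simp only [EdgesIn, Set.mem_setOf_eq, Set.mem_insert_iff, Set.mem_diff,
            Set.mem_singleton_iff, Prod.mk.injEq]
          constructor
          · rintro ⟨hp, hq, hpq, hcov⟩
            rcases eq_or_ne q x with rfl | hqx
            · exact Or.inl ⟨cov_lower_unique p d ⟨hp, hq, hpq, hcov⟩ hdcov, rfl⟩
            rcases eq_or_ne p x with rfl | hpx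
            · exact Or.inr (Or.inl ⟨rfl, cov_upper_unique q u ⟨hp, hq, hpq, hcov⟩ hucov⟩)
            · have hpi : p ∈ f i := hmem_lower p hp hpx
              have hqi : q ∈ f i := hmem_lower q hq hqx
              refine Or.inr (Or.inr ⟨⟨hpi, hqi, hpq, fun z hz => hcov z (hsubset hz)⟩, ?_⟩)
              rintro ⟨rfl, rfl⟩
              exact hcov x hxmem ⟨hdcov.2.2.1, hucov.2.2.1⟩
          · rintro (⟨h1, h2⟩ | ⟨h1, h2⟩ | ⟨⟨hp, hq, hpq, hcov⟩, hne'⟩)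
            · subst h1; subst h2; exact hdcov
            · subst h1; subst h2; exact hucov
            · refine ⟨hsubset hp, hsubset hq, hpq, ?_⟩
              rintro z hz ⟨h1, h2⟩
              rcases eq_or_ne z x with rfl | hzx
              · have hpd : p ≤ d := (hbel p hp).mp h1.le
                have huq : u ≤ q := (habv q hq).mp h2.le
                have hpd' : p = d := by
                  by_contra h
                  exact hcov d hdi ⟨lt_of_le_of_ne hpd h, lt_of_lt_of_le hdu huq⟩
                have hqu' : q = u := by
                  by_contra h
                  exact hcov u hui ⟨hpd' ▸ hdu, lt_of_le_of_ne huq (Ne.symm h)⟩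
                exact hne' ⟨hpd', hqu'⟩
              · exact hcov z (hmem_lower z hz hzx) ⟨h1, h2⟩
        have hdx_notmem : ((d, x) : α × α) ∉ insert (x, u) (EdgesIn (f i) \ {(d, u)}) := by
          rintro (h | h)
          · exact absurd (congrArg Prod.fst h) hdcov.2.2.1.ne
          · exact hxnot h.1.2.1
        have hxu_notmem : ((x, u) : α × α) ∉ EdgesIn (f i) \ {(d, u)} :=
          fun h => hxnot h.1.1
        by_cases hdu_edge : ((d, u) : α × α) ∈ EdgesIn (f i)
        · have hc1 : (EdgesIn (f i) \ {(d, u)}).ncard + 1 = (EdgesIn (f i)).ncard :=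
            Set.ncard_diff_singleton_add_one hdu_edge (Set.toFinite _)
          have hcount : (EdgesIn (f (i + 1))).ncard = (EdgesIn (f i)).ncard + 1 := by
            rw [hE, Set.ncard_insert_of_notMem hdx_notmem (Set.toFinite _),
              Set.ncard_insert_of_notMem hxu_notmem (Set.toFinite _)]
            omega
          obtain ⟨C₀, l, hrep, hlen⟩ := ih hile r (by omega)
          obtain ⟨C₀', l', hrep', hlen'⟩ := adjunct_insert_mid hrep hxnot hdu_edge
            hdcov.2.2.1 hucov.2.2.1 hbel habv
          exact ⟨C₀', l', hins ▸ hrep', by omega⟩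
        · have hdiffeq : EdgesIn (f i) \ {((d, u) : α × α)} = EdgesIn (f i) :=
            Set.diff_singleton_eq_self hdu_edge
          have hcount : (EdgesIn (f (i + 1))).ncard = (EdgesIn (f i)).ncard + 2 := by
            rw [hE, Set.ncard_insert_of_notMem hdx_notmem (Set.toFinite _),
              Set.ncard_insert_of_notMem hxu_notmem (Set.toFinite _), hdiffeq]
          obtain ⟨g, hg, hgmax⟩ := sublat_greatest (Set.toFinite _) hine hsubi
          have hlb := edges_lower_bound (Set.toFinite _) hg hgmax
          rw [hci] at hlb
          obtain ⟨C₀, l, hrep, hlen⟩ := ih hile (r - 1) (by omega)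
          have hwit : ∃ z ∈ f i, d < z ∧ z < u := by
            by_contra h
            push_neg at h
            exact hdu_edge ⟨hdi, hui, hdu, fun z hz hc => (h z hz hc.1) hc.2⟩
          refine ⟨C₀, l ++ [({x}, d, u)], ?_, by simp; omega⟩
          rw [hins, ← Set.union_singleton]
          refine AdjunctRep.step {x} d u hrep Set.subsingleton_singleton.isChain
            ⟨x, rfl⟩ ?_ hdi hui hdu hwit ?_
          · exact Set.disjoint_singleton_right.mpr hxnot
          · rintro x' hx' y rfl
            exact ⟨hbel x' hx', habv x' hx'⟩
      · -- x is the greatest element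
        have hxgreat : ∀ y ∈ f (i + 1), y ≤ x := by
          intro y hy
          have hj : x ⊔ y ∈ f (i + 1) := (hsubi1 x hxmem y hy).2
          have h1 : ¬x < x ⊔ y := fun h => hhigh ⟨x ⊔ y, hj, h⟩
          have h2 : x ⊔ y = x := (eq_of_le_of_not_lt le_sup_left h1).symm
          calc y ≤ x ⊔ y := le_sup_right
          _ = x := h2
        obtain ⟨y1, hy1, hy1x⟩ := hlow
        obtain ⟨d, hdcov, -⟩ := exists_cov_below (Set.toFinite _) hy1 hxmem hy1x
        have hdi : d ∈ f i := hmem_lower d hdcov.1 hdcov.2.2.1.ne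
        have hE : EdgesIn (f (i + 1)) = insert (d, x) (EdgesIn (f i)) := by
          ext ⟨p, q⟩
          simp only [EdgesIn, Set.mem_setOf_eq, Set.mem_insert_iff, Prod.mk.injEq]
          constructor
          · rintro ⟨hp, hq, hpq, hcov⟩
            rcases eq_or_ne q x with rfl | hqx
            · exact Or.inl ⟨cov_lower_unique p d ⟨hp, hq, hpq, hcov⟩ hdcov, rfl⟩
            · have hpx : p ≠ x := fun e => by
                subst e; exact (hxgreat q hq).not_gt hpq
              exact Or.inr ⟨hmem_lower p hp hpx, hmem_lower q hq hqx, hpq,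
                fun z hz => hcov z (hsubset hz)⟩
          · rintro (⟨h1, h2⟩ | ⟨hp, hq, hpq, hcov⟩)
            · subst h1; subst h2; exact hdcov
            · refine ⟨hsubset hp, hsubset hq, hpq, ?_⟩
              rintro z hz ⟨h1, h2⟩
              rcases eq_or_ne z x with rfl | hzx
              · exact absurd h2 (hxgreat q (hsubset hq)).not_gt
              · exact hcov z (hmem_lower z hz hzx) ⟨h1, h2⟩
        have hcount : (EdgesIn (f (i + 1))).ncard = (EdgesIn (f i)).ncard + 1 := by
          rw [hE, Set.ncard_insert_of_notMem (fun h => hxnot h.2.1) (Set.toFinite _)]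
        obtain ⟨C₀, l, hrep, hlen⟩ := ih hile r (by omega)
        exact ⟨insert x C₀, l, hins ▸ adjunct_insert_top hrep x hxnot
          (fun y hy => hxgreat y (hsubset hy)), hlen⟩
    · -- x is the least element
      have hxleast : ∀ y ∈ f (i + 1), x ≤ y := by
        intro y hy
        have hj : x ⊓ y ∈ f (i + 1) := (hsubi1 x hxmem y hy).1
        have h1 : ¬x ⊓ y < x := fun h => hlow ⟨x ⊓ y, hj, h⟩
        have h2 : x ⊓ y = x := eq_of_le_of_not_lt inf_le_left h1
        calc x = x ⊓ y := h2.symm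
        _ ≤ y := inf_le_right
      obtain ⟨y0, hy0⟩ := hine
      have hxy0 : x < y0 := lt_of_le_of_ne (hxleast y0 (hsubset hy0))
        (fun e => hxnot (e ▸ hy0))
      obtain ⟨u, hucov, -⟩ := exists_cov_above (Set.toFinite _) hxmem (hsubset hy0) hxy0
      have hE : EdgesIn (f (i + 1)) = insert (x, u) (EdgesIn (f i)) := by
        ext ⟨p, q⟩
        simp only [EdgesIn, Set.mem_setOf_eq, Set.mem_insert_iff, Prod.mk.injEq]
        constructor
        · rintro ⟨hp, hq, hpq, hcov⟩
          rcases eq_or_ne p x with rfl | hpx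
          · exact Or.inl ⟨rfl, cov_upper_unique q u ⟨hp, hq, hpq, hcov⟩ hucov⟩
          · have hqx : q ≠ x := fun e => by
              subst e; exact (hxleast p hp).not_gt hpq
            exact Or.inr ⟨hmem_lower p hp hpx, hmem_lower q hq hqx, hpq,
              fun z hz => hcov z (hsubset hz)⟩
        · rintro (⟨h1, h2⟩ | ⟨hp, hq, hpq, hcov⟩)
          · subst h1; subst h2; exact hucov
          · refine ⟨hsubset hp, hsubset hq, hpq, ?_⟩
            rintro z hz ⟨h1, h2⟩
            rcases eq_or_ne z x with rfl | hzx
            · exact absurd h1 (hxleast p (hsubset hp)).not_gt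
            · exact hcov z (hmem_lower z hz hzx) ⟨h1, h2⟩
      have hcount : (EdgesIn (f (i + 1))).ncard = (EdgesIn (f i)).ncard + 1 := by
        rw [hE, Set.ncard_insert_of_notMem (fun h => hxnot h.1) (Set.toFinite _)]
      obtain ⟨C₀, l, hrep, hlen⟩ := ih hile r (by omega)
      exact ⟨insert x C₀, l, hins ▸ adjunct_insert_bot hrep x hxnot
        (fun y hy => hxleast y (hsubset hy)), hlen⟩

/-- A finite dismantlable lattice with `n` elements has exactly `n + r - 2` covering
edges if and only if it is an adjunct of `r` chains. -/
theorem stmt4 {α : Type*} [Lattice α] [Fintype α] [Nonempty α]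
    (hd : Dismantlable α) (r : ℕ) (hr : 1 ≤ r) :
    (({p : α × α | p.1 ⋖ p.2}.ncard : ℤ) = (Fintype.card α : ℤ) + (r : ℤ) - 2) ↔
      ∃ (C₀ : Set α) (l : List (Set α × α × α)),
        AdjunctRep C₀ Set.univ l ∧ l.length + 1 = r := by

  obtain ⟨f, hf1, hf2, hfn⟩ := hd
  have hcard : 1 ≤ Fintype.card α := Fintype.card_pos
  have hEeq : {p : α × α | p.1 ⋖ p.2} = EdgesIn (Set.univ : Set α) := by
    ext ⟨p, q⟩
    simp only [Set.mem_setOf_eq, EdgesIn, CovIn, Set.mem_univ, true_and]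
    constructor
    · exact fun h => ⟨h.1, fun z _ hz => h.2 hz.1 hz.2⟩
    · exact fun h => ⟨h.1, fun z h1 h2 => h.2 z trivial ⟨h1, h2⟩⟩
  have huniv : (Set.univ : Set α).ncard = Fintype.card α := by
    rw [Set.ncard_univ, Nat.card_eq_fintype_card]
  constructor
  · intro h
    rw [hEeq] at h
    have hnat : (EdgesIn (Set.univ : Set α)).ncard + 2 = Fintype.card α + r := by omega
    rw [← hfn] at hnat
    obtain ⟨C₀, l, hrep, hlen⟩ := forward_main f hf1 hf2 (Fintype.card α) hcard le_rfl r hnat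
    rw [hfn] at hrep
    exact ⟨C₀, l, hrep, hlen⟩
  · rintro ⟨C₀, l, hrep, hlen⟩
    have hcnt := adjunct_count hrep
    rw [huniv] at hcnt
    rw [hEeq]
    omega
end

section
/- A finite dismantlable lattice with n elements has nullity r − 1 if and only if it is an adjunct of r chains. -/
section Aux
open Set
variable {α : Type*} [Lattice α] [Fintype α]


/-- Relative covering pairs of a subset. -/
def relCovSet (s : Set α) : Set (α × α) :=
  {p | p.1 ∈ s ∧ p.2 ∈ s ∧ p.1 < p.2 ∧ ∀ z ∈ s, ¬(p.1 < z ∧ z < p.2)}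

/-- A finite nonempty chain has one fewer covering pairs than elements. -/
lemma chain_relCov_count {s : Set α} (hc : IsChain (· ≤ ·) s) (hne : s.Nonempty) :
    (relCovSet s).ncard + 1 = s.ncard := by
  obtain ⟨M, hM, hMmax⟩ := Set.Finite.exists_maximalFor id s (Set.toFinite s) hne
  have hMtop : ∀ y ∈ s, y ≤ M := by
    intro y hy
    rcases eq_or_ne y M with rfl | hne'
    · exact le_rfl
    · rcases hc hy hM hne' with h | h
      · exact h
      · exact hMmax hy h
  have himg : Prod.fst '' (relCovSet s) = s \ {M} := by
    ext x
    constructor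
    · rintro ⟨⟨x', y⟩, ⟨hx, hy, hlt, _⟩, rfl⟩
      exact ⟨hx, fun h => absurd (hMtop y hy) (by simp only [mem_singleton_iff] at h; subst h; exact not_le_of_gt hlt)⟩
    · rintro ⟨hx, hxM⟩
      have hxM' : x ≠ M := hxM
      have hxlt : x < M := lt_of_le_of_ne (hMtop x hx) hxM'
      have hUne : ({z ∈ s | x < z}).Nonempty := ⟨M, hM, hxlt⟩
      obtain ⟨y, ⟨hy, hxy⟩, hymin⟩ := Set.Finite.exists_minimalFor id _ (Set.toFinite _) hUne
      refine ⟨(x, y), ⟨hx, hy, hxy, ?_⟩, rfl⟩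
      intro z hz ⟨h1, h2⟩
      exact absurd (hymin ⟨hz, h1⟩ h2.le) (not_le_of_gt h2)
  have hinj : Set.InjOn Prod.fst (relCovSet s) := by
    rintro ⟨x, y⟩ ⟨hx, hy, hxy, hcov⟩ ⟨x', y'⟩ ⟨hx', hy', hxy', hcov'⟩ h
    simp only at h
    subst h
    have : y = y' := by
      rcases eq_or_ne y y' with h | hne'
      · exact h
      · rcases hc hy hy' hne' with h | h
        · exact (hcov' y hy ⟨hxy, lt_of_le_of_ne h hne'⟩).elim
        · exact (hcov y' hy' ⟨hxy', lt_of_le_of_ne h hne'.symm⟩).elim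
    simp [this]
  calc (relCovSet s).ncard + 1 = (Prod.fst '' (relCovSet s)).ncard + 1 := by
        rw [Set.ncard_image_of_injOn hinj]
    _ = (s \ {M}).ncard + 1 := by rw [himg]
    _ = s.ncard := Set.ncard_diff_singleton_add_one hM

/-- Counting covering pairs along an adjunct representation. -/
lemma adjunctRep_relCov_count {C₀ s : Set α} {l : List (Set α × α × α)}
    (h : AdjunctRep C₀ s l) :
    (relCovSet s).ncard + 1 = s.ncard + l.length := by
  induction h with
  | base hchain hne => simpa using chain_relCov_count hchain hne
  | step c a b hs hc hcne hdisj ha hb hab hnotcov hord ih =>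
    rename_i s l
    obtain ⟨z₀, hz₀, haz₀, hz₀b⟩ := hnotcov
    -- min and max of c
    obtain ⟨m, hm, hmmin⟩ := Set.Finite.exists_minimalFor id c (Set.toFinite c) hcne
    obtain ⟨M, hM, hMmax⟩ := Set.Finite.exists_maximalFor id c (Set.toFinite c) hcne
    have hmle : ∀ y ∈ c, m ≤ y := by
      intro y hy
      rcases eq_or_ne m y with rfl | hne'
      · exact le_rfl
      · rcases hc hm hy hne' with h | h
        · exact h
        · exact hmmin hy h
    have hMge : ∀ y ∈ c, y ≤ M := by
      intro y hy
      rcases eq_or_ne y M with rfl | hne'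
      · exact le_rfl
      · rcases hc hy hM hne' with h | h
        · exact h
        · exact hMmax hy h
    have hsc : ∀ x ∈ s, x ∉ c := fun x hx hx' => Set.disjoint_left.mp hdisj hx hx'
    -- basic order facts
    have hxlea : ∀ x ∈ s, ∀ y ∈ c, x ≤ y ↔ x ≤ a := fun x hx y hy => (hord x hx y hy).1
    have hbley : ∀ x ∈ s, ∀ y ∈ c, y ≤ x ↔ b ≤ x := fun x hx y hy => (hord x hx y hy).2
    have haltc : ∀ y ∈ c, a < y := fun y hy =>
      lt_of_le_of_ne ((hxlea a ha y hy).mpr le_rfl) (fun h => hsc a ha (h ▸ hy))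
    have hcltb : ∀ y ∈ c, y < b := fun y hy =>
      lt_of_le_of_ne ((hbley b hb y hy).mpr le_rfl) (fun h => hsc b hb (h ▸ hy))
    -- decomposition
    have hdecomp : relCovSet (s ∪ c) = relCovSet s ∪ relCovSet c ∪ {(a, m)} ∪ {(M, b)} := by
      ext ⟨x, y⟩
      simp only [relCovSet, Set.mem_setOf_eq, Set.mem_union, Set.mem_singleton_iff,
        Prod.mk.injEq]
      constructor
      · rintro ⟨hx, hy, hxy, hcov⟩
        rcases hx with hx | hx <;> rcases hy with hy | hy
        · -- both in s
          exact Or.inl (Or.inl (Or.inl ⟨hx, hy, hxy, fun z hz => hcov z (Or.inl hz)⟩))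
        · -- x ∈ s, y ∈ c : must be (a, m)
          have hxa : x ≤ a := (hxlea x hx y hy).mp hxy.le
          have hxeqa : x = a := by
            by_contra hne'
            exact hcov a (Or.inl ha) ⟨lt_of_le_of_ne hxa hne', haltc y hy⟩
          have hyeqm : y = m := by
            by_contra hne'
            have hmy : m < y := lt_of_le_of_ne (hmle y hy) (Ne.symm hne')
            exact hcov m (Or.inr hm) ⟨hxeqa ▸ haltc m hm, hmy⟩
          exact Or.inl (Or.inr ⟨hxeqa, hyeqm⟩)
        · -- x ∈ c, y ∈ s : must be (M, b)
          have hby : b ≤ y := (hbley y hy x hx).mp hxy.le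
          have hyeqb : y = b := by
            by_contra hne'
            exact hcov b (Or.inl hb) ⟨hcltb x hx, lt_of_le_of_ne hby (Ne.symm hne')⟩
          have hxeqM : x = M := by
            by_contra hne'
            have hxM : x < M := lt_of_le_of_ne (hMge x hx) hne'
            exact hcov M (Or.inr hM) ⟨hxM, hyeqb ▸ hcltb M hM⟩
          exact Or.inr ⟨hxeqM, hyeqb⟩
        · -- both in c
          refine Or.inl (Or.inl (Or.inr ⟨hx, hy, hxy, fun z hz => hcov z (Or.inr hz)⟩))
      · rintro (((⟨hx, hy, hxy, hcov⟩ | ⟨hx, hy, hxy, hcov⟩) | ⟨he1, he2⟩) | ⟨he1, he2⟩)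
        · -- s-pair
          refine ⟨Or.inl hx, Or.inl hy, hxy, ?_⟩
          rintro z (hz | hz) ⟨h1, h2⟩
          · exact hcov z hz ⟨h1, h2⟩
          · -- z ∈ c between x, y in s: impossible
            have h3 : x ≤ a := (hxlea x hx z hz).mp h1.le
            have h4 : b ≤ y := (hbley y hy z hz).mp h2.le
            exact hcov z₀ hz₀ ⟨lt_of_le_of_lt h3 haz₀, lt_of_lt_of_le hz₀b h4⟩
        · -- c-pair
          refine ⟨Or.inr hx, Or.inr hy, hxy, ?_⟩
          rintro z (hz | hz) ⟨h1, h2⟩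
          · -- z ∈ s between two elements of c: then b ≤ z ≤ a
            have h3 : b ≤ z := (hbley z hz x hx).mp h1.le
            have h4 : z ≤ a := (hxlea z hz y hy).mp h2.le
            exact absurd (h3.trans h4) (not_le_of_gt hab)
          · exact hcov z hz ⟨h1, h2⟩
        · -- (a, m)
          simp only [he1, he2]
          refine ⟨Or.inl ha, Or.inr hm, haltc m hm, ?_⟩
          rintro z (hz | hz) ⟨h1, h2⟩
          · exact absurd ((hxlea z hz m hm).mp h2.le) (not_le_of_gt h1)
          · exact absurd (hmle z hz) (not_le_of_gt h2)
        · -- (M, b)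
          simp only [he1, he2]
          refine ⟨Or.inr hM, Or.inl hb, hcltb M hM, ?_⟩
          rintro z (hz | hz) ⟨h1, h2⟩
          · exact absurd ((hbley z hz M hM).mp h1.le) (not_le_of_gt h2)
          · exact absurd (hMge z hz) (not_le_of_gt h1)
    -- disjointness of the four parts
    have d1 : Disjoint (relCovSet s) (relCovSet c) := by
      rw [Set.disjoint_left]
      rintro ⟨x, y⟩ ⟨hx, _⟩ ⟨hx', _⟩
      exact hsc x hx hx'
    have d2 : Disjoint (relCovSet s ∪ relCovSet c) ({(a, m)} : Set (α × α)) := by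
      rw [Set.disjoint_right]
      rintro p rfl
      rintro (⟨_, hy, _⟩ | ⟨hx, _⟩)
      · exact hsc m hy hm
      · exact hsc a ha hx
    have d3 : Disjoint (relCovSet s ∪ relCovSet c ∪ {(a, m)}) ({(M, b)} : Set (α × α)) := by
      rw [Set.disjoint_right]
      rintro p rfl
      rintro ((⟨hx, _⟩ | ⟨_, hy, _⟩) | h)
      · exact hsc M hx hM
      · exact hsc b hb hy
      · rw [Set.mem_singleton_iff, Prod.mk.injEq] at h
        exact hsc b hb (by rw [h.2]; exact hm)
    have hcount : (relCovSet (s ∪ c)).ncard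
        = (relCovSet s).ncard + (relCovSet c).ncard + 1 + 1 := by
      rw [hdecomp, Set.ncard_union_eq d3, Set.ncard_union_eq d2, Set.ncard_union_eq d1,
        Set.ncard_singleton, Set.ncard_singleton]
    have hchainc : (relCovSet c).ncard + 1 = c.ncard := chain_relCov_count hc hcne
    have huni : (s ∪ c).ncard = s.ncard + c.ncard := Set.ncard_union_eq hdisj
    simp only [List.length_append, List.length_cons, List.length_nil]
    omega

section Graph
variable {α : Type*} [Lattice α] [Fintype α] [Nonempty α]

lemma coverGraph_connected : (coverGraph α).Connected := by
  have hbotex : (Finset.univ : Finset α).Nonempty := Finset.univ_nonempty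
  set bot := Finset.univ.inf' hbotex id with hbotdef
  have hbot : ∀ x : α, bot ≤ x := fun x => Finset.inf'_le id (Finset.mem_univ x)
  have hreach : ∀ x : α, (coverGraph α).Reachable bot x := by
    intro x
    induction x using WellFoundedLT.induction with
    | ind x ih =>
      rcases eq_or_ne bot x with rfl | hne
      · exact SimpleGraph.Reachable.refl _
      · have hlt : bot < x := lt_of_le_of_ne (hbot x) hne
        have hSne : ({z : α | z < x}).Nonempty := ⟨bot, hlt⟩
        obtain ⟨z, hz, hzmax⟩ :=
          Set.Finite.exists_maximalFor id _ (Set.toFinite _) hSne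
        have hcov : z ⋖ x := by
          refine ⟨hz, fun y h1 h2 => ?_⟩
          exact absurd (hzmax h2 h1.le) (not_le_of_gt h1)
        exact (ih z hz).trans (SimpleGraph.Adj.reachable (Or.inl hcov))
  exact ⟨fun x y => (hreach x).symm.trans (hreach y)⟩

lemma coverGraph_components_card : Nat.card (coverGraph α).ConnectedComponent = 1 := by
  rw [Nat.card_eq_one_iff_unique]
  constructor
  · constructor
    intro c d
    induction c using SimpleGraph.ConnectedComponent.ind with
    | _ v =>
      induction d using SimpleGraph.ConnectedComponent.ind with
      | _ w =>
        exact SimpleGraph.ConnectedComponent.eq.mpr (coverGraph_connected.preconnected v w)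
  · exact ⟨(coverGraph α).connectedComponentMk Classical.ofNonempty⟩

lemma coverGraph_edge_count :
    Nat.card (coverGraph α).edgeSet = (relCovSet (Set.univ : Set α)).ncard := by
  have hrel : relCovSet (Set.univ : Set α) = {p : α × α | p.1 ⋖ p.2} := by
    ext ⟨x, y⟩
    simp only [relCovSet, Set.mem_univ, true_and, Set.mem_setOf_eq]
    constructor
    · rintro ⟨h1, h2⟩
      exact ⟨h1, fun z hz hz' => h2 z (Set.mem_univ z) ⟨hz, hz'⟩⟩
    · rintro ⟨h1, h2⟩
      exact ⟨h1, fun z _ hz => h2 hz.1 hz.2⟩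
  rw [hrel, ← Nat.card_coe_set_eq]
  refine (Nat.card_eq_of_bijective
    (fun p : ({p : α × α | p.1 ⋖ p.2} : Set (α × α)) =>
      (⟨s(p.1.1, p.1.2), Or.inl p.2⟩ : (coverGraph α).edgeSet)) ⟨?_, ?_⟩).symm
  · rintro ⟨⟨x, y⟩, hp⟩ ⟨⟨x', y'⟩, hp'⟩ h
    simp only [Subtype.ext_iff, Sym2.eq_iff]
      at h
    rcases h with ⟨rfl, rfl⟩ | ⟨rfl, rfl⟩
    · rfl
    · exact ((lt_irrefl _ (hp.1.trans hp'.1)).elim)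
  · rintro ⟨e, he⟩
    induction e with
    | _ x y =>
      rcases he with h | h
      · exact ⟨⟨(x, y), h⟩, rfl⟩
      · exact ⟨⟨(y, x), h⟩, Subtype.ext (Sym2.eq_swap)⟩

lemma adjunctRep_nullity {C₀ : Set α} {l : List (Set α × α × α)}
    (h : AdjunctRep C₀ (Set.univ : Set α) l) : nullity α = l.length := by
  have hcount := adjunctRep_relCov_count h
  rw [Set.ncard_univ, Nat.card_eq_fintype_card] at hcount
  have hm : Nat.card (coverGraph α).edgeSet + 1 = Fintype.card α + l.length := by
    rw [coverGraph_edge_count]; exact hcount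
  have hn : Nat.card α = Fintype.card α := Nat.card_eq_fintype_card
  unfold nullity
  rw [coverGraph_components_card, hn]
  have h1 : ((Nat.card (coverGraph α).edgeSet : ℤ)) + 1
      = (Fintype.card α : ℤ) + (l.length : ℤ) := by exact_mod_cast hm
  omega

end Graph


section Insert
variable {α : Type*} [Lattice α] [Fintype α]

lemma adjunctRep_insert_bot {C₀ s : Set α} {l : List (Set α × α × α)} {x : α}
    (h : AdjunctRep C₀ s l) (hx : x ∉ s) (hle : ∀ y ∈ s, x ≤ y) :
    AdjunctRep (insert x C₀) (insert x s) l := by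
  induction h with
  | base hchain hne =>
    exact AdjunctRep.base (hchain.insert (fun b hb _ => Or.inl (hle b hb)))
      (Set.insert_nonempty _ _)
  | step c a b hs hc hcne hdisj ha hb hab hnotcov hord ih =>
    rename_i s l
    have hxs : x ∉ s := fun h => hx (Set.mem_union_left _ h)
    have hxc : x ∉ c := fun h => hx (Set.mem_union_right _ h)
    have hles : ∀ y ∈ s, x ≤ y := fun y hy => hle y (Set.mem_union_left _ hy)
    have hrep := AdjunctRep.step c a b (ih hxs hles) hc hcne
      (Set.disjoint_left.mpr (by
        rintro p (rfl | hp) hpc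
        · exact hxc hpc
        · exact Set.disjoint_left.mp hdisj hp hpc))
      (Set.mem_insert_of_mem _ ha) (Set.mem_insert_of_mem _ hb) hab
      (hnotcov.imp fun z hz => ⟨Set.mem_insert_of_mem _ hz.1, hz.2⟩) ?_
    · rwa [Set.insert_union] at hrep
    · rintro p (rfl | hp) y hy
      · constructor
        · constructor
          · intro _; exact hles a ha
          · intro _; exact hle y (Set.mem_union_right _ hy)
        · constructor
          · intro hyp
            exact absurd (le_antisymm hyp (hle y (Set.mem_union_right _ hy)))
              (fun h => hxc (h ▸ hy))
          · intro hbp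
            exact absurd (le_antisymm hbp (hles b hb)) (fun h => hxs (h.symm ▸ hb))
      · exact hord p hp y hy

lemma adjunctRep_insert_top {C₀ s : Set α} {l : List (Set α × α × α)} {x : α}
    (h : AdjunctRep C₀ s l) (hx : x ∉ s) (hle : ∀ y ∈ s, y ≤ x) :
    AdjunctRep (insert x C₀) (insert x s) l := by
  induction h with
  | base hchain hne =>
    exact AdjunctRep.base (hchain.insert (fun b hb _ => Or.inr (hle b hb)))
      (Set.insert_nonempty _ _)
  | step c a b hs hc hcne hdisj ha hb hab hnotcov hord ih =>
    rename_i s l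
    have hxs : x ∉ s := fun h => hx (Set.mem_union_left _ h)
    have hxc : x ∉ c := fun h => hx (Set.mem_union_right _ h)
    have hles : ∀ y ∈ s, y ≤ x := fun y hy => hle y (Set.mem_union_left _ hy)
    have hrep := AdjunctRep.step c a b (ih hxs hles) hc hcne
      (Set.disjoint_left.mpr (by
        rintro p (rfl | hp) hpc
        · exact hxc hpc
        · exact Set.disjoint_left.mp hdisj hp hpc))
      (Set.mem_insert_of_mem _ ha) (Set.mem_insert_of_mem _ hb) hab
      (hnotcov.imp fun z hz => ⟨Set.mem_insert_of_mem _ hz.1, hz.2⟩) ?_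
    · rwa [Set.insert_union] at hrep
    · rintro p (rfl | hp) y hy
      · constructor
        · constructor
          · intro hyp
            exact absurd (le_antisymm hyp (hle y (Set.mem_union_right _ hy)))
              (fun h => hxc (h ▸ hy))
          · intro hpa
            exact absurd (le_antisymm hpa (hles a ha)) (fun h => hxs (h.symm ▸ ha))
        · constructor
          · intro _; exact hles b hb
          · intro _; exact hle y (Set.mem_union_right _ hy)
      · exact hord p hp y hy

lemma adjunctRep_insert_mid {C₀ s : Set α} {l : List (Set α × α × α)} {x u w : α}
    (hux : u < x) (hxw : x < w) (h : AdjunctRep C₀ s l) :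
    x ∉ s → u ∈ s → w ∈ s →
    (∀ y ∈ s, y ≤ x ↔ y ≤ u) → (∀ y ∈ s, x ≤ y ↔ w ≤ y) →
    (∀ z ∈ s, ¬(u < z ∧ z < w)) →
    ∃ C₀' l', AdjunctRep C₀' (insert x s) l' ∧ l'.length = l.length := by
  induction h with
  | base hchain hne =>
    intro hx hu hw hdown hup hcov
    refine ⟨insert x C₀, [], AdjunctRep.base ?_ (Set.insert_nonempty _ _), rfl⟩
    refine hchain.insert fun y hy hne' => ?_
    rcases eq_or_ne y u with rfl | hyu
    · exact Or.inr hux.le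
    rcases hchain hy hu hyu with hyle | hley
    · exact Or.inr ((hdown y hy).mpr hyle)
    rcases eq_or_ne y w with rfl | hyw
    · exact Or.inl hxw.le
    rcases hchain hy hw hyw with hyle | hley'
    · exact ((hcov y hy) ⟨lt_of_le_of_ne hley (Ne.symm hyu), lt_of_le_of_ne hyle hyw⟩).elim
    · exact Or.inl ((hup y hy).mpr hley')
  | step c a b hs hc hcne hdisj ha hb hab hnotcov hord ih =>
    rename_i s l
    intro hx hu hw hdown hup hcov
    have hxs : x ∉ s := fun h => hx (Set.mem_union_left _ h)
    have hxc : x ∉ c := fun h => hx (Set.mem_union_right _ h)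
    have hsc : ∀ y ∈ s, y ∉ c := fun y hy hyc => Set.disjoint_left.mp hdisj hy hyc
    rcases hu with hu | hu <;> rcases hw with hw | hw
    · -- Case A : u, w ∈ s
      obtain ⟨C₀', l'', hrep, hlen⟩ := ih hxs hu hw
        (fun y hy => hdown y (Set.mem_union_left _ hy))
        (fun y hy => hup y (Set.mem_union_left _ hy))
        (fun z hz => hcov z (Set.mem_union_left _ hz))
      refine ⟨C₀', l'' ++ [(c, a, b)], ?_, by simp [hlen]⟩
      have hstep := AdjunctRep.step c a b hrep hc hcne
        (Set.disjoint_left.mpr (by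
          rintro p (rfl | hp) hpc
          · exact hxc hpc
          · exact hsc p hp hpc))
        (Set.mem_insert_of_mem _ ha) (Set.mem_insert_of_mem _ hb) hab
        (hnotcov.imp fun z hz => ⟨Set.mem_insert_of_mem _ hz.1, hz.2⟩) ?_
      · rwa [Set.insert_union] at hstep
      · rintro p (rfl | hp) y hy
        · constructor
          · exact (hup y (Set.mem_union_right _ hy)).trans
              ((hord w hw y hy).1.trans (hup a (Set.mem_union_left _ ha)).symm)
          · exact (hdown y (Set.mem_union_right _ hy)).trans
              ((hord u hu y hy).2.trans (hdown b (Set.mem_union_left _ hb)).symm)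
        · exact hord p hp y hy
    · -- Case C : u ∈ s, w ∈ c
      have haw : a < w := lt_of_le_of_ne ((hord a ha w hw).1.mpr le_rfl)
        (fun h => hsc a ha (h ▸ hw))
      have hua : u = a := by
        by_contra hne'
        have hule : u ≤ a := (hord u hu w hw).1.mp (hux.trans hxw).le
        exact hcov a (Set.mem_union_left _ ha) ⟨lt_of_le_of_ne hule hne', haw⟩
      have hwmin : ∀ y ∈ c, w ≤ y := by
        intro y hy
        rcases eq_or_ne y w with rfl | hne'
        · exact le_rfl
        rcases hc hy hw hne' with hyw | hwy
        · have hay : a < y := lt_of_le_of_ne ((hord a ha y hy).1.mpr le_rfl)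
            (fun h => hsc a ha (h ▸ hy))
          exact ((hcov y (Set.mem_union_right _ hy))
            ⟨hua ▸ hay, lt_of_le_of_ne hyw hne'⟩).elim
        · exact hwy
      refine ⟨C₀, l ++ [(insert x c, a, b)], ?_, by simp⟩
      have hstep := AdjunctRep.step (insert x c) a b hs
        (hc.insert fun y hy _ => Or.inl (hxw.le.trans (hwmin y hy)))
        (Set.insert_nonempty _ _)
        (Set.disjoint_right.mpr (by
          rintro p (rfl | hpc) hps
          · exact hxs hps
          · exact hsc p hps hpc))
        ha hb hab hnotcov ?_
      · rwa [Set.union_insert] at hstep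
      · rintro p hp y (rfl | hy)
        · constructor
          · rw [hdown p (Set.mem_union_left _ hp), hua]
          · exact (hup p (Set.mem_union_left _ hp)).trans (hord p hp w hw).2
        · exact hord p hp y hy
    · -- Case D : u ∈ c, w ∈ s
      have hbu : u < b := lt_of_le_of_ne ((hord b hb u hu).2.mpr le_rfl)
        (fun h => hsc b hb (h.symm ▸ hu))
      have hwb : w = b := by
        by_contra hne'
        have hble : b ≤ w := (hord w hw u hu).2.mp (hux.trans hxw).le
        exact hcov b (Set.mem_union_left _ hb) ⟨hbu, lt_of_le_of_ne hble (Ne.symm hne')⟩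
      have humax : ∀ y ∈ c, y ≤ u := by
        intro y hy
        rcases eq_or_ne y u with rfl | hne'
        · exact le_rfl
        rcases hc hy hu hne' with hyu | huy
        · exact hyu
        · have hyb : y < b := lt_of_le_of_ne ((hord b hb y hy).2.mpr le_rfl)
            (fun h => hsc b hb (h.symm ▸ hy))
          exact ((hcov y (Set.mem_union_right _ hy))
            ⟨lt_of_le_of_ne huy (Ne.symm hne'), hwb ▸ hyb⟩).elim
      refine ⟨C₀, l ++ [(insert x c, a, b)], ?_, by simp⟩
      have hstep := AdjunctRep.step (insert x c) a b hs
        (hc.insert fun y hy _ => Or.inr ((humax y hy).trans hux.le))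
        (Set.insert_nonempty _ _)
        (Set.disjoint_right.mpr (by
          rintro p (rfl | hpc) hps
          · exact hxs hps
          · exact hsc p hps hpc))
        ha hb hab hnotcov ?_
      · rwa [Set.union_insert] at hstep
      · rintro p hp y (rfl | hy)
        · constructor
          · exact (hdown p (Set.mem_union_left _ hp)).trans (hord p hp u hu).1
          · rw [hup p (Set.mem_union_left _ hp), hwb]
        · exact hord p hp y hy
    · -- Case B : u, w ∈ c
      refine ⟨C₀, l ++ [(insert x c, a, b)], ?_, by simp⟩
      have hchain' : IsChain (· ≤ ·) (insert x c) := by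
        refine hc.insert fun y hy hne' => ?_
        rcases eq_or_ne y u with rfl | hyu
        · exact Or.inr hux.le
        rcases hc hy hu hyu with hyle | hley
        · exact Or.inr ((hdown y (Set.mem_union_right _ hy)).mpr hyle)
        rcases eq_or_ne y w with rfl | hyw
        · exact Or.inl hxw.le
        rcases hc hy hw hyw with hyle | hley'
        · exact ((hcov y (Set.mem_union_right _ hy))
            ⟨lt_of_le_of_ne hley (Ne.symm hyu), lt_of_le_of_ne hyle hyw⟩).elim
        · exact Or.inl ((hup y (Set.mem_union_right _ hy)).mpr hley')
      have hstep := AdjunctRep.step (insert x c) a b hs hchain'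
        (Set.insert_nonempty _ _)
        (Set.disjoint_right.mpr (by
          rintro p (rfl | hpc) hps
          · exact hxs hps
          · exact hsc p hps hpc))
        ha hb hab hnotcov ?_
      · rwa [Set.union_insert] at hstep
      · rintro p hp y (rfl | hy)
        · constructor
          · exact (hdown p (Set.mem_union_left _ hp)).trans (hord p hp u hu).1
          · exact (hup p (Set.mem_union_left _ hp)).trans (hord p hp w hw).2
        · exact hord p hp y hy

lemma adjunctRep_extend {s : Set α} {x : α} (hsub : IsSublatticeSet s)
    (hsub' : IsSublatticeSet (insert x s)) (hx : x ∉ s) (hne : s.Nonempty)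
    {C₀ : Set α} {l : List (Set α × α × α)} (h : AdjunctRep C₀ s l) :
    ∃ C₀' l', AdjunctRep C₀' (insert x s) l' ∧
      (l'.length = l.length ∨ l'.length = l.length + 1) := by
  by_cases hD : ∃ y ∈ s, y < x
  swap
  · -- x is a new bottom
    have hbot : ∀ y ∈ s, x ≤ y := by
      intro y hy
      have hmem : x ⊓ y ∈ insert x s :=
        (hsub' x (Set.mem_insert _ _) y (Set.mem_insert_of_mem _ hy)).1
      rcases hmem with heq | hmem
      · exact inf_eq_left.mp heq
      · exact absurd ⟨x ⊓ y, hmem,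
          lt_of_le_of_ne inf_le_left (fun h' => hx (h' ▸ hmem))⟩ hD
    exact ⟨insert x C₀, l, adjunctRep_insert_bot h hx hbot, Or.inl rfl⟩
  by_cases hU : ∃ y ∈ s, x < y
  swap
  · -- x is a new top
    have htop : ∀ y ∈ s, y ≤ x := by
      intro y hy
      have hmem : x ⊔ y ∈ insert x s :=
        (hsub' x (Set.mem_insert _ _) y (Set.mem_insert_of_mem _ hy)).2
      rcases hmem with heq | hmem
      · exact sup_eq_left.mp heq
      · exact absurd ⟨x ⊔ y, hmem,
          lt_of_le_of_ne le_sup_left (fun h' => hx (h' ▸ hmem))⟩ hU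
    exact ⟨insert x C₀, l, adjunctRep_insert_top h hx htop, Or.inl rfl⟩
  -- x lies strictly between elements of s
  obtain ⟨d0, hd0, hd0x⟩ := hD
  obtain ⟨e0, he0, hxe0⟩ := hU
  have hDfin : ({y ∈ s | y < x}).Finite := Set.toFinite _
  have hUfin : ({y ∈ s | x < y}).Finite := Set.toFinite _
  have hDne : hDfin.toFinset.Nonempty := by
    rw [Set.Finite.toFinset_nonempty]; exact ⟨d0, hd0, hd0x⟩
  have hUne : hUfin.toFinset.Nonempty := by
    rw [Set.Finite.toFinset_nonempty]; exact ⟨e0, he0, hxe0⟩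
  set u := hDfin.toFinset.sup' hDne id with hudef
  set w := hUfin.toFinset.inf' hUne id with hwdef
  have hus : u ∈ s := Finset.sup'_induction hDne id
    (fun p hp q hq => (hsub p hp q hq).2)
    (fun y hy => ((hDfin.mem_toFinset).mp hy).1)
  have hws : w ∈ s := Finset.inf'_induction hUne id
    (fun p hp q hq => (hsub p hp q hq).1)
    (fun y hy => ((hUfin.mem_toFinset).mp hy).1)
  have hux : u < x := lt_of_le_of_ne
    (Finset.sup'_le hDne id fun y hy => ((hDfin.mem_toFinset).mp hy).2.le)
    (fun h' => hx (h' ▸ hus))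
  have hxw : x < w := lt_of_le_of_ne
    (Finset.le_inf' hUne id fun y hy => ((hUfin.mem_toFinset).mp hy).2.le)
    (fun h' => hx (h'.symm ▸ hws))
  have hdown : ∀ y ∈ s, y ≤ x ↔ y ≤ u := by
    intro y hy
    constructor
    · intro hyx
      exact Finset.le_sup' id ((hDfin.mem_toFinset).mpr
        ⟨hy, lt_of_le_of_ne hyx (fun h' => hx (h' ▸ hy))⟩)
    · exact fun h' => h'.trans hux.le
  have hup : ∀ y ∈ s, x ≤ y ↔ w ≤ y := by
    intro y hy
    constructor
    · intro hxy
      exact Finset.inf'_le id ((hUfin.mem_toFinset).mpr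
        ⟨hy, lt_of_le_of_ne hxy (fun h' => hx (h'.symm ▸ hy))⟩)
    · exact fun h' => hxw.le.trans h'
  by_cases hmid : ∃ z ∈ s, u < z ∧ z < w
  · -- adjoin the singleton chain {x}
    refine ⟨C₀, l ++ [({x}, u, w)], ?_, Or.inr (by simp)⟩
    have hsingle : IsChain (· ≤ ·) ({x} : Set α) := by
      intro p hp q hq hpq
      rw [Set.mem_singleton_iff] at hp hq
      exact absurd (hp.trans hq.symm) hpq
    have hstep := AdjunctRep.step {x} u w h hsingle (Set.singleton_nonempty x)
      (Set.disjoint_singleton_right.mpr hx) hus hws (hux.trans hxw) hmid ?_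
    · rwa [Set.union_singleton] at hstep
    · rintro p hp y rfl
      exact ⟨hdown p hp, hup p hp⟩
  · -- insert x into an existing chain
    obtain ⟨C₀', l', hrep, hlen⟩ := adjunctRep_insert_mid hux hxw h hx hus hws hdown hup
      (fun z hz hzc => hmid ⟨z, hz, hzc⟩)
    exact ⟨C₀', l', hrep, Or.inl hlen⟩

lemma dismantlable_adjunctRep (hd : Dismantlable α) [Nonempty α] :
    ∃ (C₀ : Set α) (l : List (Set α × α × α)), AdjunctRep C₀ (Set.univ : Set α) l := by
  obtain ⟨f, hcard, hmono, htop⟩ := hd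
  have hcardpos : 1 ≤ Fintype.card α := Fintype.card_pos
  have key : ∀ i, 1 ≤ i → i ≤ Fintype.card α →
      ∃ C₀ l, AdjunctRep C₀ (f i) l := by
    intro i
    induction i with
    | zero => omega
    | succ n ih =>
      intro _ hle
      rcases Nat.eq_or_lt_of_le (show 1 ≤ n + 1 from Nat.le_add_left 1 n) with h1 | h1
      · -- n + 1 = 1 : singleton
        obtain ⟨hc1, _⟩ := hcard (n + 1) (by omega) hle
        rw [← h1] at hc1
        obtain ⟨x, hx⟩ := Set.ncard_eq_one.mp hc1
        refine ⟨{x}, [], ?_⟩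
        rw [show n + 1 = 1 from h1.symm, hx]
        exact AdjunctRep.base (by
          intro p hp q hq hpq
          rw [Set.mem_singleton_iff] at hp hq
          exact absurd (hp.trans hq.symm) hpq) (Set.singleton_nonempty x)
      · -- inductive step
        have hn1 : 1 ≤ n := by omega
        have hnle : n ≤ Fintype.card α := by omega
        obtain ⟨C₀, l, hrep⟩ := ih hn1 hnle
        obtain ⟨hcn, hsubn⟩ := hcard n hn1 hnle
        obtain ⟨hcn1, hsubn1⟩ := hcard (n + 1) (by omega) hle
        have hss : f n ⊆ f (n + 1) := hmono n hn1 (by omega)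
        -- there is exactly one new element
        have hfin : (f (n + 1)).Finite := Set.toFinite _
        have hdiff : ((f (n + 1)) \ (f n)).ncard = 1 := by
          rw [Set.ncard_diff hss]
          omega
        obtain ⟨x, hxd⟩ := Set.ncard_eq_one.mp hdiff
        have hxmem : x ∈ f (n + 1) := by
          have : x ∈ f (n+1) \ f n := hxd ▸ rfl
          exact this.1
        have hxnot : x ∉ f n := by
          have : x ∈ f (n+1) \ f n := hxd ▸ rfl
          exact this.2
        have hfeq : f (n + 1) = insert x (f n) := by
          apply Set.eq_of_subset_of_ncard_le
          · intro y hy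
            by_cases hyn : y ∈ f n
            · exact Set.mem_insert_of_mem _ hyn
            · have : y ∈ f (n + 1) \ f n := ⟨hy, hyn⟩
              rw [hxd, Set.mem_singleton_iff] at this
              rw [this]
              exact Set.mem_insert _ _
          · rw [hcn1, Set.ncard_insert_of_notMem hxnot, hcn]
          · exact Set.toFinite _
        have hnev : (f n).Nonempty := by
          rw [← Set.ncard_pos]
          omega
        rw [hfeq]
        obtain ⟨C₀', l', hrep', _⟩ := adjunctRep_extend hsubn (hfeq ▸ hsubn1) hxnot hnev hrep
        exact ⟨C₀', l', hrep'⟩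
  obtain ⟨C₀, l, hrep⟩ := key (Fintype.card α) hcardpos le_rfl
  rw [htop] at hrep
  exact ⟨C₀, l, hrep⟩

end Insert


end Aux

/-- A finite dismantlable lattice with `n` elements has nullity `r - 1` if and only
if it is an adjunct of `r` chains. -/
theorem stmt5 {α : Type*} [Lattice α] [Fintype α] [Nonempty α]
    (hd : Dismantlable α) (r : ℕ) (hr : 1 ≤ r) :
    nullity α = (r : ℤ) - 1 ↔
      ∃ (C₀ : Set α) (l : List (Set α × α × α)),
        AdjunctRep C₀ Set.univ l ∧ l.length + 1 = r := by
  obtain ⟨C₀, l, hrep⟩ := dismantlable_adjunctRep hd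
  have hval : nullity α = l.length := adjunctRep_nullity hrep
  constructor
  · intro hnul
    refine ⟨C₀, l, hrep, ?_⟩
    rw [hval] at hnul
    omega
  · rintro ⟨C₀', l', hrep', hlen⟩
    rw [adjunctRep_nullity hrep']
    omega
end

section
/- Every RC-lattice contains no crown, and hence every RC-lattice is dismantlable. -/
/-- A subset `s` of a poset is a crown: for some `n ≥ 3` it consists of `2n` distinct
elements `x₁, y₁, …, xₙ, yₙ` whose only (strict) comparabilities are `xᵢ ≤ yᵢ` and
`x_{i+1} ≤ yᵢ` (indices cyclic, so also `x₁ ≤ yₙ`). -/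
def IsCrown {α : Type*} [PartialOrder α] (s : Set α) : Prop :=
  ∃ n : ℕ, 3 ≤ n ∧ ∃ x y : ZMod n → α,
    (∀ i j, x i = x j → i = j) ∧ (∀ i j, y i = y j → i = j) ∧ (∀ i j, x i ≠ y j) ∧
    s = Set.range x ∪ Set.range y ∧
    (∀ i j, x i ≤ x j ↔ i = j) ∧
    (∀ i j, y i ≤ y j ↔ i = j) ∧
    (∀ i j, x i ≤ y j ↔ (j = i ∨ i = j + 1)) ∧
    (∀ i j, ¬ y i ≤ x j)

lemma natCast_inj_of_lt {n a b : ℕ} (ha : a < n) (hb : b < n)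
    (h : (a : ZMod n) = (b : ZMod n)) : a = b := by
  have := (ZMod.natCast_eq_natCast_iff a b n).mp h
  have h2 : a % n = b % n := this
  rwa [Nat.mod_eq_of_lt ha, Nat.mod_eq_of_lt hb] at h2

/-- In an RC lattice, every nonempty sublattice set has a removable element
(one whose removal leaves a sublattice set). -/
lemma exists_removable {α : Type*} [Lattice α]
    (hRC : ∀ x y : α, Reducible x → Reducible y → x ≤ y ∨ y ≤ x)
    {s : Set α} (hs : IsSublatticeSet s) (hne : s.Nonempty) :
    ∃ a ∈ s, IsSublatticeSet (s \ {a}) := by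
  by_cases H : ∃ a ∈ s, ¬ ∃ u ∈ s, ∃ v ∈ s, u ≠ a ∧ v ≠ a ∧ (u ⊔ v = a ∨ u ⊓ v = a)
  · obtain ⟨a, ha, hirr⟩ := H
    refine ⟨a, ha, ?_⟩
    intro p hp q hq
    obtain ⟨hp1, hp2⟩ := hp
    obtain ⟨hq1, hq2⟩ := hq
    simp only [Set.mem_singleton_iff] at hp2 hq2
    refine ⟨⟨(hs p hp1 q hq1).1, ?_⟩, ⟨(hs p hp1 q hq1).2, ?_⟩⟩ <;>
      simp only [Set.mem_singleton_iff] <;> intro h <;>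
      exact hirr ⟨p, hp1, q, hq1, hp2, hq2, by tauto⟩
  · exfalso
    push_neg at H
    -- every element of s is s-reducible, hence reducible in α
    have hred : ∀ a ∈ s, Reducible a := by
      intro a ha
      obtain ⟨u, _, v, _, hu, hv, h⟩ := H a ha
      rcases h with h | h
      · exact Or.inl ⟨u, v, hu, hv, h⟩
      · exact Or.inr ⟨u, v, hu, hv, h⟩
    obtain ⟨m, hm⟩ := hne
    obtain ⟨u, hu, v, hv, hum, hvm, h⟩ := H m hm
    have hcomp := hRC u v (hred u hu) (hred v hv)
    rcases h with h | h <;> rcases hcomp with hc | hc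
    · exact hvm (by rw [← h, sup_eq_right.mpr hc])
    · exact hum (by rw [← h, sup_eq_left.mpr hc])
    · exact hum (by rw [← h, inf_eq_left.mpr hc])
    · exact hvm (by rw [← h, inf_eq_right.mpr hc])

open Classical in
/-- Remove one removable element from a set, if possible. -/
noncomputable def remover {α : Type*} [Lattice α] (s : Set α) : Set α :=
  if h : ∃ a ∈ s, IsSublatticeSet (s \ {a}) then s \ {h.choose} else s

lemma remover_subset {α : Type*} [Lattice α] (s : Set α) : remover s ⊆ s := by
  unfold remover
  split
  · exact Set.diff_subset
  · exact subset_rfl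

lemma remover_spec {α : Type*} [Lattice α]
    (hRC : ∀ x y : α, Reducible x → Reducible y → x ≤ y ∨ y ≤ x)
    {s : Set α} (hs : IsSublatticeSet s) (hne : s.Nonempty) :
    ∃ a ∈ s, remover s = s \ {a} ∧ IsSublatticeSet (s \ {a}) := by
  have h := exists_removable hRC hs hne
  refine ⟨h.choose, h.choose_spec.1, ?_, h.choose_spec.2⟩
  unfold remover
  rw [dif_pos h]

/-- An RC-lattice (a finite lattice in which any two reducible elements are comparable)
contains no crown, and hence is dismantlable. -/
theorem stmt6 {α : Type*} [Lattice α] [Fintype α] [Nonempty α]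
    (hRC : ∀ x y : α, Reducible x → Reducible y → x ≤ y ∨ y ≤ x) :
    (∀ s : Set α, ¬ IsCrown s) ∧ Dismantlable α := by
  constructor
  · -- no crown
    rintro s ⟨n, hn, x, y, hxinj, hyinj, hxy, hsdef, hxx, hyy, hxyle, hyx⟩
    have h01 : (0 : ZMod n) ≠ 1 := by
      intro h
      have : (0 : ℕ) = 1 := natCast_inj_of_lt (n:=n) (by omega) (by omega) (by exact_mod_cast h)
      omega
    have h02 : (0 : ZMod n) ≠ 2 := by
      intro h
      have : (0 : ℕ) = 2 := natCast_inj_of_lt (n:=n) (by omega) (by omega) (by exact_mod_cast h)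
      omega
    have h12 : (1 : ZMod n) ≠ 2 := by
      intro h
      have : (1 : ℕ) = 2 := natCast_inj_of_lt (n:=n) (by omega) (by omega) (by exact_mod_cast h)
      omega
    set a := x 0 ⊔ x 1 with hadef
    set b := x 1 ⊔ x 2 with hbdef
    have hx0a : x 0 ≠ a := by
      intro h
      have : x 1 ≤ x 0 := h ▸ le_sup_right
      exact h01 ((hxx 1 0).mp this).symm
    have hx1a : x 1 ≠ a := by
      intro h
      have : x 0 ≤ x 1 := h ▸ le_sup_left
      exact h01 ((hxx 0 1).mp this)
    have hx1b : x 1 ≠ b := by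
      intro h
      have : x 2 ≤ x 1 := h ▸ le_sup_right
      exact h12 ((hxx 2 1).mp this).symm
    have hx2b : x 2 ≠ b := by
      intro h
      have : x 1 ≤ x 2 := h ▸ le_sup_left
      exact h12 ((hxx 1 2).mp this)
    have hared : Reducible a := Or.inl ⟨x 0, x 1, hx0a, hx1a, rfl⟩
    have hbred : Reducible b := Or.inl ⟨x 1, x 2, hx1b, hx2b, rfl⟩
    have hay : a ≤ y 0 := by
      apply sup_le
      · exact (hxyle 0 0).mpr (Or.inl rfl)
      · exact (hxyle 1 0).mpr (Or.inr (by norm_num))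
    have hby : b ≤ y 1 := by
      apply sup_le
      · exact (hxyle 1 1).mpr (Or.inl rfl)
      · exact (hxyle 2 1).mpr (Or.inr (by norm_num))
    rcases hRC a b hared hbred with h | h
    · have : x 0 ≤ y 1 := le_trans (le_trans le_sup_left h) hby
      rcases (hxyle 0 1).mp this with h' | h'
      · exact h01 h'.symm
      · exact h02 (by rw [h']; norm_num)
    · have : x 2 ≤ y 0 := le_trans (le_trans le_sup_right h) hay
      rcases (hxyle 2 0).mp this with h' | h'
      · exact h02 h'
      · exact h12 (by rw [h']; norm_num)
  · -- dismantlable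
    set N := Fintype.card α with hN
    have hkey : ∀ k, k ≤ N →
        IsSublatticeSet (remover^[k] (Set.univ : Set α)) ∧
        (remover^[k] (Set.univ : Set α)).ncard = N - k := by
      intro k
      induction k with
      | zero =>
        intro _
        simp [Set.ncard_univ, IsSublatticeSet, hN]
      | succ k ih =>
        intro hk
        obtain ⟨hsub, hcard⟩ := ih (by omega)
        set s := remover^[k] (Set.univ : Set α) with hsdef
        have hne : s.Nonempty := by
          rw [← Set.ncard_pos s.toFinite] at *
          omega
        obtain ⟨c, hc, heq, hsub'⟩ := remover_spec hRC hsub hne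
        rw [Function.iterate_succ_apply', ← hsdef, heq]
        refine ⟨hsub', ?_⟩
        rw [Set.ncard_diff_singleton_of_mem hc, hcard]
        omega
    refine ⟨fun i => remover^[N - i] Set.univ, ?_, ?_, ?_⟩
    · intro i hi1 hi2
      obtain ⟨hsub, hcard⟩ := hkey (N - i) (by omega)
      exact ⟨by rw [hcard]; omega, hsub⟩
    · intro i hi1 hi2
      show remover^[N - i] Set.univ ⊆ remover^[N - (i+1)] Set.univ
      have : N - i = (N - (i + 1)) + 1 := by omega
      rw [this, Function.iterate_succ_apply']
      exact remover_subset _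
    · simp [hN]
end
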